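/- arXiv:2201.10835 — 8 statements merged into one kernel-verified Lean document; each statement's English description precedes it below -/
import Mathlib

section
/- Let G be an α-expander on n vertices, and let S, T ⊆ V(G) be disjoint vertex sets with |T| ≥ (2/α)|S|. Then for every r ≥ 0, the ball of radius r around T in the induced subgraph G \ S has size at least min{n/2, (1 + α/2)^r · |T|}. -/
/-- A graph `G` on `n` vertices is an `α`-expander if every vertex set `U` with
`|U| ≤ n/2` satisfies `|N(U) \ U| ≥ α |U|`. -/
def SimpleGraph.IsExpander {V : Type*} [Fintype V] [DecidableEq V]
    (G : SimpleGraph V) [DecidableRel G.Adj] (α : ℝ) : Prop :=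
  ∀ U : Finset V, 2 * U.card ≤ Fintype.card V →
    α * U.card ≤ ((U.biUnion (fun v => G.neighborFinset v)) \ U).card

/-- The ball of radius `r` around `T` in the induced subgraph `G \ S`:
all vertices reachable from `T` by a walk of length at most `r` avoiding `S`. -/
def SimpleGraph.ballAvoiding {V : Type*} (G : SimpleGraph V)
    (S T : Finset V) (r : ℕ) : Set V :=
  {v : V | ∃ t ∈ T, ∃ w : G.Walk t v, w.length ≤ r ∧ ∀ x ∈ w.support, x ∉ S}

lemma ball_subset_succ {V : Type*} (G : SimpleGraph V) (S T : Finset V) (r : ℕ) :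
    G.ballAvoiding S T r ⊆ G.ballAvoiding S T (r + 1) := by
  rintro v ⟨t, ht, w, hw, hS⟩
  exact ⟨t, ht, w, hw.trans (Nat.le_succ r), hS⟩

lemma T_subset_ball {V : Type*} (G : SimpleGraph V) (S T : Finset V)
    (hST : Disjoint S T) (r : ℕ) : (T : Set V) ⊆ G.ballAvoiding S T r := by
  intro t ht
  refine ⟨t, Finset.mem_coe.mp ht, SimpleGraph.Walk.nil, by simp, ?_⟩
  intro x hx
  simp only [SimpleGraph.Walk.support_nil, List.mem_singleton] at hx
  subst hx
  exact fun hxS => (Finset.disjoint_left.mp hST hxS) (Finset.mem_coe.mp ht)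

lemma step_mem_ball {V : Type*} (G : SimpleGraph V) (S T : Finset V) (r : ℕ)
    {u v : V} (hu : u ∈ G.ballAvoiding S T r) (hadj : G.Adj u v) (hvS : v ∉ S) :
    v ∈ G.ballAvoiding S T (r + 1) := by
  obtain ⟨t, ht, w, hw, hS⟩ := hu
  refine ⟨t, ht, w.concat hadj, ?_, ?_⟩
  · rw [SimpleGraph.Walk.length_concat]
    exact Nat.succ_le_succ hw
  · intro x hx
    rw [SimpleGraph.Walk.support_concat, List.mem_append, List.mem_singleton] at hx
    rcases hx with hx | rfl
    · exact hS x hx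
    · exact hvS

/-- Let `G` be an `α`-expander on `n` vertices and `S, T` disjoint sets with
`|T| ≥ (2/α)|S|`.  Then for every `r ≥ 0` the ball of radius `r` around `T`
in `G \ S` has size at least `min (n/2) ((1+α/2)^r |T|)`. -/
theorem expander_ball_remove {V : Type*} [Fintype V] [DecidableEq V]
    (G : SimpleGraph V) [DecidableRel G.Adj] (α : ℝ) (hα : 0 < α)
    (hG : G.IsExpander α) (S T : Finset V) (hST : Disjoint S T)
    (hT : (2 / α) * S.card ≤ T.card) (r : ℕ) :
    min ((Fintype.card V : ℝ) / 2) ((1 + α / 2) ^ r * T.card)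
      ≤ (G.ballAvoiding S T r).ncard := by
  classical
  -- |S| ≤ (α/2) |T|
  have hs : (S.card : ℝ) ≤ (α / 2) * T.card := by
    have h2 := mul_le_mul_of_nonneg_left hT (le_of_lt (half_pos hα))
    rw [← mul_assoc] at h2
    have : α / 2 * (2 / α) = 1 := by field_simp
    rw [this, one_mul] at h2
    exact h2
  induction r with
  | zero =>
    have hTB : (T : Set V) ⊆ G.ballAvoiding S T 0 := T_subset_ball G S T hST 0
    have hcard : (T.card : ℝ) ≤ (G.ballAvoiding S T 0).ncard := by
      have := Set.ncard_le_ncard hTB (Set.toFinite _)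
      have hTn : (T : Set V).ncard = T.card := by
        simp [Set.ncard_coe_finset]
      rw [hTn] at this
      exact_mod_cast this
    calc min ((Fintype.card V : ℝ) / 2) ((1 + α / 2) ^ 0 * T.card)
        ≤ (1 + α / 2) ^ 0 * T.card := min_le_right _ _
      _ = T.card := by rw [pow_zero, one_mul]
      _ ≤ _ := hcard
  | succ r ih =>
    by_cases hn : (Fintype.card V : ℝ) / 2 ≤ (G.ballAvoiding S T (r + 1)).ncard
    · exact le_trans (min_le_left _ _) hn
    push_neg at hn
    -- set up the finsets
    set B := G.ballAvoiding S T r with hB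
    have hBfin : B.Finite := Set.toFinite _
    set U : Finset V := hBfin.toFinset with hU
    have hUcard : (U.card : ℕ) = B.ncard := (Set.ncard_eq_toFinset_card B hBfin).symm
    -- B ⊆ B_{r+1}
    have hmono : B ⊆ G.ballAvoiding S T (r + 1) := ball_subset_succ G S T r
    have hBle : (B.ncard : ℝ) ≤ (G.ballAvoiding S T (r + 1)).ncard := by
      exact_mod_cast Set.ncard_le_ncard hmono (Set.toFinite _)
    have hBsmall : (B.ncard : ℝ) < (Fintype.card V : ℝ) / 2 := lt_of_le_of_lt hBle hn
    -- apply the expander condition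
    have hUsmall : 2 * U.card ≤ Fintype.card V := by
      have : (2 * U.card : ℝ) < Fintype.card V := by
        rw [hUcard]; linarith
      exact_mod_cast this.le
    have hexp := hG U hUsmall
    set X : Finset V := (U.biUnion fun v => G.neighborFinset v) \ U with hX
    -- X \ S injects into the new ball, together with U, disjointly
    have hsub : U ∪ (X \ S) ⊆ (Set.toFinite (G.ballAvoiding S T (r + 1))).toFinset := by
      intro v hv
      rw [Set.Finite.mem_toFinset]
      rcases Finset.mem_union.mp hv with hv | hv
      · exact hmono (by rwa [hU, Set.Finite.mem_toFinset] at hv)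
      · rw [Finset.mem_sdiff] at hv
        obtain ⟨hvX, hvS⟩ := hv
        rw [hX, Finset.mem_sdiff] at hvX
        obtain ⟨hvN, _⟩ := hvX
        obtain ⟨u, huU, hvu⟩ := Finset.mem_biUnion.mp hvN
        rw [SimpleGraph.mem_neighborFinset] at hvu
        have huB : u ∈ B := by rwa [hU, Set.Finite.mem_toFinset] at huU
        exact step_mem_ball G S T r huB hvu hvS
    have hdisj : Disjoint U (X \ S) := by
      rw [Finset.disjoint_left]
      intro a haU ha
      rw [Finset.mem_sdiff] at ha
      rw [hX, Finset.mem_sdiff] at ha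
      exact ha.1.2 haU
    have hcard1 : U.card + (X \ S).card ≤ (G.ballAvoiding S T (r + 1)).ncard := by
      rw [Set.ncard_eq_toFinset_card _ (Set.toFinite (G.ballAvoiding S T (r + 1)))]
      calc U.card + (X \ S).card = (U ∪ (X \ S)).card :=
            (Finset.card_union_of_disjoint hdisj).symm
        _ ≤ _ := Finset.card_le_card hsub
    have hcard2 : X.card ≤ (X \ S).card + S.card := Finset.card_le_card_sdiff_add_card
    -- |T| ≤ |B|
    have hTB : (T.card : ℝ) ≤ B.ncard := by
      have := Set.ncard_le_ncard (T_subset_ball G S T hST r) (Set.toFinite _)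
      rw [Set.ncard_coe_finset] at this
      exact_mod_cast this
    -- from ih get the power bound
    have hpow : (1 + α / 2) ^ r * T.card ≤ (B.ncard : ℝ) := by
      rcases min_le_iff.mp ih with h | h
      · linarith
      · exact h
    -- combine
    have hreal1 : (U.card : ℝ) + (X \ S).card ≤ (G.ballAvoiding S T (r + 1)).ncard := by
      exact_mod_cast hcard1
    have hreal2 : (X.card : ℝ) ≤ (X \ S).card + S.card := by exact_mod_cast hcard2
    have hb : (U.card : ℝ) = B.ncard := by exact_mod_cast hUcard
    have key : (1 + α / 2) * B.ncard ≤ (G.ballAvoiding S T (r + 1)).ncard := by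
      nlinarith [hexp, hreal1, hreal2, hb, hs, hTB]
    refine le_trans (min_le_right _ _) ?_
    have hpos : (0 : ℝ) < 1 + α / 2 := by linarith
    calc (1 + α / 2) ^ (r + 1) * T.card = (1 + α / 2) * ((1 + α / 2) ^ r * T.card) := by
          ring
      _ ≤ (1 + α / 2) * B.ncard := by
          exact mul_le_mul_of_nonneg_left hpow hpos.le
      _ ≤ _ := key
end

section
/- Let G be an α-expander on n vertices and let S, T, U ⊆ V(G) with T, U nonempty, S disjoint from T ∪ U, and |T|, |U| ≥ (2/α)|S|. Then in the induced subgraph G \ S, the distance between T and U is at most (2/log₂(1+α/2) + 3)·log₂ n. -/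
namespace ExpanderAux

open Finset

variable {V : Type*} [Fintype V] [DecidableEq V]
variable (G : SimpleGraph V) [DecidableRel G.Adj]

/-- Iterated balls around `T` in `G` avoiding `S`. -/
def ball (S T : Finset V) : ℕ → Finset V
  | 0 => T
  | (i+1) => ball S T i ∪
      ((((ball S T i).biUnion (fun v => G.neighborFinset v)) \ ball S T i) \ S)

lemma subset_ball (S T : Finset V) : ∀ i, T ⊆ ball G S T i
  | 0 => le_refl T
  | (i+1) => (subset_ball S T i).trans Finset.subset_union_left

lemma ball_walk (S T : Finset V) (hTS : ∀ x ∈ T, x ∉ S) :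
    ∀ i, ∀ x ∈ ball G S T i,
      ∃ t ∈ T, ∃ w : G.Walk t x, (∀ y ∈ w.support, y ∉ S) ∧ w.length ≤ i := by
  intro i
  induction i with
  | zero =>
    intro x hx
    refine ⟨x, hx, SimpleGraph.Walk.nil, ?_, by simp⟩
    simp only [SimpleGraph.Walk.support_nil, List.mem_singleton]
    rintro y rfl
    exact hTS _ hx
  | succ i ih =>
    intro x hx
    rcases Finset.mem_union.mp hx with hx | hx
    · obtain ⟨t, ht, w, hw, hlen⟩ := ih x hx
      exact ⟨t, ht, w, hw, hlen.trans (Nat.le_succ i)⟩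
    · rw [Finset.mem_sdiff] at hx
      obtain ⟨hx1, hxS⟩ := hx
      rw [Finset.mem_sdiff] at hx1
      obtain ⟨hx1, _⟩ := hx1
      obtain ⟨y, hy, hadj⟩ := Finset.mem_biUnion.mp hx1
      rw [SimpleGraph.mem_neighborFinset] at hadj
      obtain ⟨t, ht, w, hw, hlen⟩ := ih y hy
      refine ⟨t, ht, w.concat hadj, ?_, ?_⟩
      · intro z hz
        rw [SimpleGraph.Walk.support_concat,
          List.mem_append, List.mem_singleton] at hz
        rcases hz with hz | rfl
        · exact hw z hz
        · exact hxS
      · rw [SimpleGraph.Walk.length_concat]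
        omega

lemma ball_growth {α : ℝ} (hα : 0 < α) (hG : G.IsExpander α) (S T : Finset V)
    (hScard : (S.card : ℝ) ≤ α / 2 * T.card) (i : ℕ)
    (h2 : 2 * (ball G S T i).card ≤ Fintype.card V) :
    (1 + α / 2) * (ball G S T i).card ≤ ((ball G S T (i+1)).card : ℝ) := by
  set B := ball G S T i with hB
  set N := ((B.biUnion (fun v => G.neighborFinset v)) \ B) with hN
  have hexp : α * B.card ≤ (N.card : ℝ) := hG B h2
  have hdisj : Disjoint B (N \ S) :=
    (Finset.sdiff_disjoint.mono_left (Finset.sdiff_subset)).symm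
  have hcard : (ball G S T (i+1)).card = B.card + (N \ S).card := by
    show (B ∪ (N \ S)).card = _
    exact Finset.card_union_of_disjoint hdisj
  have hsd : (N.card : ℝ) - S.card ≤ ((N \ S).card : ℝ) := by
    have := Finset.card_le_card_sdiff_add_card (s := N) (t := S)
    have : (N.card : ℝ) ≤ ((N \ S).card : ℝ) + S.card := by exact_mod_cast this
    linarith
  have hTB : (T.card : ℝ) ≤ B.card := by
    exact_mod_cast Finset.card_le_card (subset_ball G S T i)
  rw [hcard]
  push_cast
  nlinarith [hsd, hexp, hTB, hScard]

lemma ball_pow {α : ℝ} (hα : 0 < α) (hG : G.IsExpander α) (S T : Finset V)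
    (hScard : (S.card : ℝ) ≤ α / 2 * T.card) :
    ∀ k, (∀ j < k, 2 * (ball G S T j).card ≤ Fintype.card V) →
      (1 + α / 2) ^ k * T.card ≤ ((ball G S T k).card : ℝ) := by
  intro k
  induction k with
  | zero => intro _; simp [ball]
  | succ k ih =>
    intro h
    have h1 := ih (fun j hj => h j (hj.trans (Nat.lt_succ_self k)))
    have h2 := ball_growth G hα hG S T hScard k (h k (Nat.lt_succ_self k))
    have hpos : (0:ℝ) < 1 + α / 2 := by linarith
    calc (1 + α / 2) ^ (k+1) * T.card = (1 + α/2) * ((1 + α/2)^k * T.card) := by ring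
    _ ≤ (1 + α/2) * ((ball G S T k).card : ℝ) := by
        exact mul_le_mul_of_nonneg_left h1 hpos.le
    _ ≤ _ := h2

/-- There is some radius at which the ball exceeds half the vertices. -/
lemma exists_big_ball {α : ℝ} (hα : 0 < α) (hG : G.IsExpander α) (S T : Finset V)
    (hTne : T.Nonempty) (hScard : (S.card : ℝ) ≤ α / 2 * T.card) :
    ∃ k, ¬ (2 * (ball G S T k).card ≤ Fintype.card V) := by
  by_contra h
  push_neg at h
  obtain ⟨k0, hk0⟩ := pow_unbounded_of_one_lt ((Fintype.card V : ℝ))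
    (show (1:ℝ) < 1 + α/2 by linarith)
  have h1 := ball_pow G hα hG S T hScard k0 (fun j _ => h j)
  have hT1 : (1:ℝ) ≤ T.card := by exact_mod_cast hTne.card_pos
  have hle : ((ball G S T k0).card : ℝ) ≤ Fintype.card V := by
    exact_mod_cast Finset.card_le_univ _
  nlinarith [pow_pos (show (0:ℝ) < 1 + α/2 by linarith) k0]

end ExpanderAux

open ExpanderAux Finset in
/-- Let `G` be an `α`-expander on `n` vertices and `S, T, U` vertex sets with
`T, U` nonempty, `S` disjoint from `T ∪ U`, and `|T|, |U| ≥ (2/α)|S|`.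
Then in `G \ S` the distance between `T` and `U` is at most
`(2/log₂(1+α/2) + 3) · log₂ n`, i.e. there is a walk between `T` and `U`
avoiding `S` of at most that length. -/
theorem expander_dist_remove {V : Type*} [Fintype V] [DecidableEq V]
    (G : SimpleGraph V) [DecidableRel G.Adj] (α : ℝ) (hα : 0 < α)
    (hG : G.IsExpander α) (S T U : Finset V)
    (hTne : T.Nonempty) (hUne : U.Nonempty)
    (hS : Disjoint S (T ∪ U))
    (hT : (2 / α) * S.card ≤ T.card) (hU : (2 / α) * S.card ≤ U.card) :
    ∃ t ∈ T, ∃ u ∈ U, ∃ w : G.Walk t u,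
      (∀ x ∈ w.support, x ∉ S) ∧
      (w.length : ℝ) ≤ (2 / Real.logb 2 (1 + α / 2) + 3) *
        Real.logb 2 (Fintype.card V) := by
  set n := Fintype.card V with hn
  have hST : Disjoint S T := hS.mono_right Finset.subset_union_left
  have hSU : Disjoint S U := hS.mono_right Finset.subset_union_right
  have hTS : ∀ x ∈ T, x ∉ S := fun x hx hxS => (Finset.disjoint_left.mp hST) hxS hx
  have hUS : ∀ x ∈ U, x ∉ S := fun x hx hxS => (Finset.disjoint_left.mp hSU) hxS hx
  have hScT : (S.card : ℝ) ≤ α / 2 * T.card := by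
    rw [div_mul_eq_mul_div, div_le_iff₀ hα] at hT
    nlinarith
  have hScU : (S.card : ℝ) ≤ α / 2 * U.card := by
    rw [div_mul_eq_mul_div, div_le_iff₀ hα] at hU
    nlinarith
  have hexT := exists_big_ball G hα hG S T hTne hScT
  have hexU := exists_big_ball G hα hG S U hUne hScU
  set K := Nat.find hexT with hKdef
  set M := Nat.find hexU with hMdef
  have hK : ¬ (2 * (ball G S T K).card ≤ n) := Nat.find_spec hexT
  have hM : ¬ (2 * (ball G S U M).card ≤ n) := Nat.find_spec hexU
  have hKmin : ∀ j < K, 2 * (ball G S T j).card ≤ n := by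
    intro j hj
    have := Nat.find_min hexT hj
    omega
  have hMmin : ∀ j < M, 2 * (ball G S U j).card ≤ n := by
    intro j hj
    have := Nat.find_min hexU hj
    omega
  -- the two balls intersect
  have hinter : ((ball G S T K) ∩ (ball G S U M)).Nonempty := by
    by_contra h
    rw [Finset.not_nonempty_iff_eq_empty] at h
    have hd : Disjoint (ball G S T K) (ball G S U M) :=
      Finset.disjoint_iff_inter_eq_empty.mpr h
    have hcu := Finset.card_union_of_disjoint hd
    have hle : ((ball G S T K) ∪ (ball G S U M)).card ≤ n := Finset.card_le_univ _
    omega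
  obtain ⟨x, hx⟩ := hinter
  rw [Finset.mem_inter] at hx
  obtain ⟨t, ht, wT, hwT, hlenT⟩ := ball_walk G S T hTS K x hx.1
  obtain ⟨u, hu, wU, hwU, hlenU⟩ := ball_walk G S U hUS M x hx.2
  refine ⟨t, ht, u, hu, wT.append wU.reverse, ?_, ?_⟩
  · intro y hy
    rw [SimpleGraph.Walk.mem_support_append_iff] at hy
    rcases hy with hy | hy
    · exact hwT y hy
    · rw [SimpleGraph.Walk.support_reverse, List.mem_reverse] at hy
      exact hwU y hy
  · -- length bound
    set L := Real.logb 2 (1 + α / 2) with hL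
    set Ln := Real.logb 2 (n : ℝ) with hLn
    have hone : (1:ℝ) < 1 + α/2 := by linarith
    have hLpos : 0 < L := Real.logb_pos one_lt_two hone
    have hn1 : 1 ≤ n := Fintype.card_pos_iff.mpr ⟨hTne.choose⟩
    have hLn0 : 0 ≤ Ln := Real.logb_nonneg one_lt_two (by exact_mod_cast hn1)
    -- (1+α/2)^K ≤ n hence K ≤ Ln / L
    have hbound : ∀ (W : Finset V), W.Nonempty → (S.card : ℝ) ≤ α / 2 * W.card →
        ∀ k : ℕ, (∀ j < k, 2 * (ball G S W j).card ≤ n) → (k : ℝ) ≤ Ln / L := by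
      intro W hWne hSc k hk
      have h1 := ball_pow G hα hG S W hSc k hk
      have hW1 : (1:ℝ) ≤ W.card := by exact_mod_cast hWne.card_pos
      have hle : ((ball G S W k).card : ℝ) ≤ (n : ℝ) := by
        exact_mod_cast Finset.card_le_univ _
      have hpow : (1 + α/2) ^ k ≤ (n : ℝ) := by nlinarith [pow_pos (by linarith : (0:ℝ) < 1 + α/2) k]
      have hlog : Real.logb 2 ((1 + α/2) ^ k) ≤ Ln :=
        Real.logb_le_logb_of_le one_lt_two (pow_pos (by linarith) k) hpow
      rw [Real.logb_pow] at hlog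
      rw [le_div_iff₀ hLpos]
      exact hlog
    have hKb : (K : ℝ) ≤ Ln / L := hbound T hTne hScT K hKmin
    have hMb : (M : ℝ) ≤ Ln / L := hbound U hUne hScU M hMmin
    have hlen : ((wT.append wU.reverse).length : ℝ) ≤ (K : ℝ) + M := by
      rw [SimpleGraph.Walk.length_append, SimpleGraph.Walk.length_reverse]
      push_cast
      have : wT.length + wU.length ≤ K + M := Nat.add_le_add hlenT hlenU
      exact_mod_cast this
    have heq : 2 * (Ln / L) = 2 / L * Ln := by ring
    have h3 : 0 ≤ 3 * Ln := by linarith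
    calc ((wT.append wU.reverse).length : ℝ) ≤ (K : ℝ) + M := hlen
    _ ≤ 2 * (Ln / L) := by linarith
    _ ≤ 2 / L * Ln + 3 * Ln := by linarith [heq.le]
    _ = (2 / L + 3) * Ln := by ring
end

section
/- Every graph G has vertex expansion at least λ₂(L_G)/(2Δ(G)), i.e., every vertex set U with |U| ≤ n/2 satisfies |N(U) ∩ (V\U)| ≥ (λ₂(L_G)/(2Δ(G)))·|U|. -/
open Matrix

/-- The eigenvalues of a Hermitian matrix, listed in non-decreasing order. -/
noncomputable def sortedEigs {n : ℕ} (A : Matrix (Fin n) (Fin n) ℝ)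
    (hA : A.IsHermitian) : Fin n → ℝ :=
  hA.eigenvalues ∘ Tuple.sort hA.eigenvalues

/-- The Laplacian of a graph is Hermitian. -/
theorem lapMatrix_isHermitian {n : ℕ} (G : SimpleGraph (Fin n))
    [DecidableRel G.Adj] : (G.lapMatrix ℝ).IsHermitian :=
  (G.posSemidef_lapMatrix ℝ).isHermitian

lemma rayleigh_second {n : ℕ} (hn : 1 < n) (A : Matrix (Fin n) (Fin n) ℝ)
    (hA : A.IsHermitian) (hpsd : A.PosSemidef) (w x : Fin n → ℝ)
    (hw : A *ᵥ w = 0) (hw0 : w ≠ 0) (hwx : w ⬝ᵥ x = 0) :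
    sortedEigs A hA ⟨1, hn⟩ * (x ⬝ᵥ x) ≤ x ⬝ᵥ (A *ᵥ x) := by
  classical
  set μ := hA.eigenvalues with hμ
  set V : Matrix (Fin n) (Fin n) ℝ := (hA.eigenvectorUnitary : Matrix (Fin n) (Fin n) ℝ) with hV
  obtain ⟨h1, h2⟩ := Unitary.mem_iff.mp hA.eigenvectorUnitary.2
  have hD : (diagonal (RCLike.ofReal ∘ μ) : Matrix (Fin n) (Fin n) ℝ) = diagonal μ := by
    congr 1
  have hspec : A = V * diagonal μ * star V := by
    rw [← hD]; exact hA.spectral_theorem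
  have hstar : star V = Vᵀ := by
    rw [Matrix.star_eq_conjTranspose, conjTranspose_eq_transpose_of_trivial]
  set c : Fin n → ℝ := star V *ᵥ x with hc
  set d : Fin n → ℝ := star V *ᵥ w with hd
  have hdotx : ∀ y : Fin n → ℝ, x ⬝ᵥ (V *ᵥ y) = c ⬝ᵥ y := by
    intro y
    rw [dotProduct_mulVec, hc, hstar, ← vecMul_transpose, transpose_transpose]
  have hdotw : ∀ y : Fin n → ℝ, w ⬝ᵥ (V *ᵥ y) = d ⬝ᵥ y := by
    intro y
    rw [dotProduct_mulVec, hd, hstar, ← vecMul_transpose, transpose_transpose]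
  have key1 : x ⬝ᵥ (A *ᵥ x) = ∑ i, μ i * (c i * c i) := by
    conv_lhs => rw [hspec]
    rw [← mulVec_mulVec, ← mulVec_mulVec, hdotx, dotProduct]
    refine Finset.sum_congr rfl fun i _ => ?_
    rw [mulVec_diagonal]; ring
  have key2 : x ⬝ᵥ x = ∑ i, c i * c i := by
    have : x ⬝ᵥ x = x ⬝ᵥ ((V * star V) *ᵥ x) := by rw [h2, one_mulVec]
    rw [this, ← mulVec_mulVec, hdotx, dotProduct]
  have key3 : ∀ i, μ i * d i = 0 := by
    have h0 : diagonal μ *ᵥ d = 0 := by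
      have : star V *ᵥ (A *ᵥ w) = 0 := by rw [hw, mulVec_zero]
      rw [hspec, ← mulVec_mulVec, ← mulVec_mulVec, mulVec_mulVec, h1, one_mulVec] at this
      exact this
    intro i
    have := congrFun h0 i
    rwa [mulVec_diagonal] at this
  have key4 : d ⬝ᵥ c = 0 := by
    have : w ⬝ᵥ ((V * star V) *ᵥ x) = w ⬝ᵥ x := by rw [h2, one_mulVec]
    rw [← mulVec_mulVec, hdotw] at this
    rw [this, hwx]
  have key5 : d ≠ 0 := by
    intro h
    apply hw0
    have : w = (V * star V) *ᵥ w := by rw [h2, one_mulVec]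
    rw [this, ← mulVec_mulVec, ← hd, h, mulVec_zero]
  have hxx : (0:ℝ) ≤ x ⬝ᵥ x := by
    rw [key2]; exact Finset.sum_nonneg fun i _ => mul_self_nonneg _
  set lam := sortedEigs A hA ⟨1, hn⟩ with hlam
  rcases le_or_gt lam 0 with hl | hl
  · have hQ : (0:ℝ) ≤ x ⬝ᵥ (A *ᵥ x) := by
      have := hpsd.dotProduct_mulVec_nonneg x
      simpa using this
    nlinarith
  · -- positive case
    set σ := Tuple.sort μ with hσ
    have hmono : Monotone (μ ∘ σ) := Tuple.monotone_sort μ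
    have hpos : ∀ j : Fin n, j ≠ ⟨0, by omega⟩ → lam ≤ μ (σ j) := by
      intro j hj
      apply hmono
      rw [Fin.le_def]
      simp only
      have : (j : ℕ) ≠ 0 := fun h => hj (Fin.ext h)
      omega
    set i₀ : Fin n := σ ⟨0, by omega⟩ with hi₀
    have hzero : ∀ i, d i ≠ 0 → i = i₀ := by
      intro i hi
      have hμ0 : μ i = 0 := by
        rcases mul_eq_zero.mp (key3 i) with h | h
        · exact h
        · exact absurd h hi
      by_contra hne
      have : i = σ (σ.symm i) := (Equiv.apply_symm_apply σ i).symm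
      have hjne : σ.symm i ≠ ⟨0, by omega⟩ := by
        intro h
        apply hne
        rw [this, h]
      have := hpos (σ.symm i) hjne
      rw [Equiv.apply_symm_apply] at this
      have hnn := Matrix.PosSemidef.eigenvalues_nonneg hpsd i
      have : hpsd.1.eigenvalues = μ := rfl
      nlinarith [Matrix.PosSemidef.eigenvalues_nonneg hpsd i, hpos (σ.symm i) hjne]
    obtain ⟨i₁, hi₁⟩ : ∃ i, d i ≠ 0 := by
      by_contra h
      push_neg at h
      exact key5 (funext fun i => h i)
    have hdi₀ : d i₀ ≠ 0 := by rwa [hzero i₁ hi₁] at hi₁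
    have hc0 : c i₀ = 0 := by
      have : d ⬝ᵥ c = d i₀ * c i₀ := by
        rw [dotProduct]
        refine Finset.sum_eq_single i₀ (fun i _ hne => ?_) (fun h => absurd (Finset.mem_univ i₀) h)
        have : d i = 0 := by
          by_contra h
          exact hne (hzero i h)
        rw [this, zero_mul]
      rw [key4] at this
      exact (mul_eq_zero.mp this.symm).resolve_left hdi₀
    rw [key1, key2, Finset.mul_sum]
    refine Finset.sum_le_sum fun i _ => ?_
    rcases eq_or_ne i i₀ with h | h
    · rw [h, hc0]; simp
    · have hji : σ.symm i ≠ ⟨0, by omega⟩ := by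
        intro hj
        apply h
        have := congrArg σ hj
        rwa [Equiv.apply_symm_apply] at this
      have := hpos (σ.symm i) hji
      rw [Equiv.apply_symm_apply] at this
      nlinarith [mul_self_nonneg (c i)]

/-- Every graph `G` has vertex expansion at least `λ₂(L_G)/(2Δ(G))`: every vertex
set `U` with `|U| ≤ n/2` satisfies
`|N(U) \ U| ≥ (λ₂(L_G)/(2Δ(G)))·|U|`. -/
theorem vertex_expansion_ge_lambda_two_div {n : ℕ} (hn : 1 < n)
    (G : SimpleGraph (Fin n)) [DecidableRel G.Adj] :
    ∀ U : Finset (Fin n), 2 * U.card ≤ n →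
      sortedEigs (G.lapMatrix ℝ) (lapMatrix_isHermitian G) ⟨1, hn⟩
          / (2 * G.maxDegree) * U.card
        ≤ ((U.biUnion (fun v => G.neighborFinset v)) \ U).card := by
  intro U hU
  classical
  classical
  set k : ℕ := U.card with hk
  set x : Fin n → ℝ := fun v => if v ∈ U then (n : ℝ) - k else -(k : ℝ) with hx
  have hkn : k ≤ n := by
    calc k ≤ Fintype.card (Fin n) := Finset.card_le_univ U
    _ = n := Fintype.card_fin n
  have hsplit : ∀ a b : ℝ, ∑ v : Fin n, (if v ∈ U then a else b)
      = (k : ℝ) * a + ((n : ℝ) - k) * b := by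
    intro a b
    rw [Finset.sum_ite, Finset.sum_const, Finset.sum_const]
    have h1 : Finset.univ.filter (· ∈ U) = U := by
      ext v; simp
    have h2 : (Finset.univ.filter (· ∉ U)).card = n - k := by
      have : Finset.univ.filter (· ∉ U) = Uᶜ := by ext v; simp
      rw [this, Finset.card_compl, Fintype.card_fin]
    rw [h1, h2, nsmul_eq_mul, nsmul_eq_mul, Nat.cast_sub hkn, ← hk]
    try ring
  have hwx : (fun _ => (1:ℝ)) ⬝ᵥ x = 0 := by
    rw [dotProduct]
    simp only [one_mul, hx]
    rw [hsplit]
    ring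
  have hxx : x ⬝ᵥ x = (k : ℝ) * ((n : ℝ) - k) * n := by
    rw [dotProduct]
    have : ∀ v, x v * x v = if v ∈ U then ((n:ℝ) - k)^2 else (k:ℝ)^2 := by
      intro v; by_cases h : v ∈ U <;> simp [hx, h] <;> ring
    rw [Finset.sum_congr rfl fun v _ => this v, hsplit]
    ring
  set bd : Finset (Fin n) := (U.biUnion (fun v => G.neighborFinset v)) \ U with hbd
  set B : ℕ := bd.card with hB
  have hite : ∀ (P : Prop) [Decidable P], (0:ℝ) ≤ if P then (n:ℝ)^2 else 0 := by
    intro P _; split <;> positivity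
  have hQ : x ⬝ᵥ (G.lapMatrix ℝ *ᵥ x) ≤ (B : ℝ) * G.maxDegree * (n:ℝ)^2 := by
    have hform : x ⬝ᵥ (G.lapMatrix ℝ *ᵥ x)
        = (∑ i, ∑ j, if G.Adj i j then (x i - x j)^2 else 0) / 2 := by
      rw [← Matrix.toLinearMap₂'_apply', SimpleGraph.lapMatrix_toLinearMap₂']
    have ht : ∀ i j, (if G.Adj i j then (x i - x j)^2 else 0)
        ≤ (if j ∈ bd ∧ G.Adj i j then (n:ℝ)^2 else 0)
          + (if i ∈ bd ∧ G.Adj i j then (n:ℝ)^2 else 0) := by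
      intro i j
      by_cases hadj : G.Adj i j
      · by_cases hiU : i ∈ U <;> by_cases hjU : j ∈ U
        · have : x i - x j = 0 := by simp [hx, hiU, hjU]
          rw [if_pos hadj, this]
          simpa using add_nonneg (hite _) (hite _)
        · have hjbd : j ∈ bd := by
            rw [hbd, Finset.mem_sdiff]
            exact ⟨Finset.mem_biUnion.mpr ⟨i, hiU,
              (SimpleGraph.mem_neighborFinset G i j).mpr hadj⟩, hjU⟩
          have hdiff : x i - x j = (n:ℝ) := by
            simp only [hx, if_pos hiU, if_neg hjU]; ring
          rw [if_pos hadj, hdiff, if_pos (show j ∈ bd ∧ G.Adj i j from ⟨hjbd, hadj⟩)]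
          have := hite (i ∈ bd ∧ G.Adj i j)
          linarith
        · have hibd : i ∈ bd := by
            rw [hbd, Finset.mem_sdiff]
            exact ⟨Finset.mem_biUnion.mpr ⟨j, hjU,
              (SimpleGraph.mem_neighborFinset G j i).mpr hadj.symm⟩, hiU⟩
          have hdiff : x i - x j = -(n:ℝ) := by
            simp only [hx, if_neg hiU, if_pos hjU]; ring
          have hsq : (-(n:ℝ))^2 = (n:ℝ)^2 := by ring
          rw [if_pos hadj, hdiff, hsq,
            if_pos (show i ∈ bd ∧ G.Adj i j from ⟨hibd, hadj⟩)]
          have := hite (j ∈ bd ∧ G.Adj i j)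
          linarith
        · have : x i - x j = 0 := by simp [hx, hiU, hjU]
          rw [if_pos hadj, this]
          simpa using add_nonneg (hite _) (hite _)
      · rw [if_neg hadj]
        exact add_nonneg (hite _) (hite _)
    have hinner1 : ∀ j, ∑ i, (if j ∈ bd ∧ G.Adj i j then (n:ℝ)^2 else 0)
        ≤ (if j ∈ bd then (G.maxDegree:ℝ) * (n:ℝ)^2 else 0) := by
      intro j
      by_cases hj : j ∈ bd
      · simp only [hj, true_and, if_true]
        have hfil : Finset.univ.filter (fun i => G.Adj i j) = G.neighborFinset j := by
          ext i; simp [SimpleGraph.mem_neighborFinset, G.adj_comm]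
        calc ∑ i, (if G.Adj i j then (n:ℝ)^2 else 0)
            = (G.degree j : ℝ) * (n:ℝ)^2 := by
              have hdeg : (G.neighborFinset j).card = G.degree j := rfl
              rw [Finset.sum_ite, Finset.sum_const, Finset.sum_const, hfil, hdeg,
                smul_zero, add_zero, nsmul_eq_mul]
          _ ≤ (G.maxDegree:ℝ) * (n:ℝ)^2 := by
              have := G.degree_le_maxDegree j
              have hc : (G.degree j : ℝ) ≤ (G.maxDegree : ℝ) := by exact_mod_cast this
              nlinarith [sq_nonneg (n:ℝ)]
      · simp [hj]
    have hinner2 : ∀ i, ∑ j, (if i ∈ bd ∧ G.Adj i j then (n:ℝ)^2 else 0)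
        ≤ (if i ∈ bd then (G.maxDegree:ℝ) * (n:ℝ)^2 else 0) := by
      intro i
      by_cases hi : i ∈ bd
      · simp only [hi, true_and, if_true]
        have hfil : Finset.univ.filter (fun j => G.Adj i j) = G.neighborFinset i := by
          ext j; simp [SimpleGraph.mem_neighborFinset]
        calc ∑ j, (if G.Adj i j then (n:ℝ)^2 else 0)
            = (G.degree i : ℝ) * (n:ℝ)^2 := by
              have hdeg : (G.neighborFinset i).card = G.degree i := rfl
              rw [Finset.sum_ite, Finset.sum_const, Finset.sum_const, hfil, hdeg,
                smul_zero, add_zero, nsmul_eq_mul]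
          _ ≤ (G.maxDegree:ℝ) * (n:ℝ)^2 := by
              have := G.degree_le_maxDegree i
              have hc : (G.degree i : ℝ) ≤ (G.maxDegree : ℝ) := by exact_mod_cast this
              nlinarith [sq_nonneg (n:ℝ)]
      · simp [hi]
    have hbdsum : ∑ v : Fin n, (if v ∈ bd then (G.maxDegree:ℝ) * (n:ℝ)^2 else 0)
        = (B:ℝ) * ((G.maxDegree:ℝ) * (n:ℝ)^2) := by
      rw [Finset.sum_ite, Finset.sum_const, Finset.sum_const]
      have : Finset.univ.filter (· ∈ bd) = bd := by ext v; simp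
      rw [this]
      simp [hB]
    have hsum1 : ∑ i, ∑ j, (if j ∈ bd ∧ G.Adj i j then (n:ℝ)^2 else 0)
        ≤ (B:ℝ) * ((G.maxDegree:ℝ) * (n:ℝ)^2) := by
      rw [Finset.sum_comm, ← hbdsum]
      exact Finset.sum_le_sum fun j _ => hinner1 j
    have hsum2 : ∑ i, ∑ j, (if i ∈ bd ∧ G.Adj i j then (n:ℝ)^2 else 0)
        ≤ (B:ℝ) * ((G.maxDegree:ℝ) * (n:ℝ)^2) := by
      rw [← hbdsum]
      exact Finset.sum_le_sum fun i _ => hinner2 i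
    have htotal : ∑ i, ∑ j, (if G.Adj i j then (x i - x j)^2 else 0)
        ≤ 2 * ((B:ℝ) * ((G.maxDegree:ℝ) * (n:ℝ)^2)) := by
      calc ∑ i, ∑ j, (if G.Adj i j then (x i - x j)^2 else 0)
          ≤ ∑ i, ∑ j, ((if j ∈ bd ∧ G.Adj i j then (n:ℝ)^2 else 0)
              + (if i ∈ bd ∧ G.Adj i j then (n:ℝ)^2 else 0)) :=
            Finset.sum_le_sum fun i _ => Finset.sum_le_sum fun j _ => ht i j
        _ = (∑ i, ∑ j, (if j ∈ bd ∧ G.Adj i j then (n:ℝ)^2 else 0))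
              + ∑ i, ∑ j, (if i ∈ bd ∧ G.Adj i j then (n:ℝ)^2 else 0) := by
            rw [← Finset.sum_add_distrib]
            exact Finset.sum_congr rfl fun i _ => Finset.sum_add_distrib
        _ ≤ 2 * ((B:ℝ) * ((G.maxDegree:ℝ) * (n:ℝ)^2)) := by linarith
    rw [hform]
    linarith
  -- apply the Rayleigh quotient bound
  set lam := sortedEigs (G.lapMatrix ℝ) (lapMatrix_isHermitian G) ⟨1, hn⟩ with hlamdef
  have hw0 : (fun _ : Fin n => (1:ℝ)) ≠ 0 := by
    intro h
    have := congrFun h ⟨0, by omega⟩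
    simp at this
  have hray : lam * (x ⬝ᵥ x) ≤ x ⬝ᵥ (G.lapMatrix ℝ *ᵥ x) :=
    rayleigh_second hn (G.lapMatrix ℝ) (lapMatrix_isHermitian G)
      (G.posSemidef_lapMatrix ℝ) (fun _ => 1) x
      (G.lapMatrix_mulVec_const_eq_zero) hw0 hwx
  have hlam_nonneg : 0 ≤ lam :=
    Matrix.PosSemidef.eigenvalues_nonneg (G.posSemidef_lapMatrix ℝ)
      (Tuple.sort (lapMatrix_isHermitian G).eigenvalues ⟨1, hn⟩)
  have main : lam * ((k:ℝ) * ((n:ℝ) - k) * n) ≤ (B:ℝ) * G.maxDegree * (n:ℝ)^2 := by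
    rw [← hxx]
    exact hray.trans hQ
  have hn0 : (0:ℝ) < n := by
    have : 0 < n := by omega
    exact_mod_cast this
  have hk0 : (0:ℝ) ≤ k := by positivity
  have hnk2 : (n:ℝ) ≤ 2 * ((n:ℝ) - k) := by
    have : (2 * k : ℝ) ≤ n := by exact_mod_cast hU
    linarith
  by_cases hΔ : G.maxDegree = 0
  · rw [hΔ]
    simp
  · have h2Δ : (0:ℝ) < 2 * G.maxDegree := by
      have : 0 < G.maxDegree := Nat.pos_of_ne_zero hΔ
      have : (0:ℝ) < G.maxDegree := by exact_mod_cast this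
      linarith
    rw [div_mul_eq_mul_div, div_le_iff₀ h2Δ]
    nlinarith [main, mul_pos hn0 hn0,
      mul_le_mul_of_nonneg_left hnk2 (mul_nonneg (mul_nonneg hlam_nonneg hk0) hn0.le),
      mul_nonneg (mul_nonneg hlam_nonneg hk0) hn0.le]
end

section
/- Let G be a graph on n vertices and let H be an induced subgraph of G on m vertices. Then for all k ∈ [m], δ(H) − λ_{n−k+1}(A_G) ≤ λ_k(L_H) ≤ Δ(H) − λ_{m−k+1}(A_G), where eigenvalues are listed in non-decreasing order. -/
open Matrix

/-- The adjacency matrix of a graph is Hermitian. -/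
theorem adjMatrix_isHermitian {n : ℕ} (G : SimpleGraph (Fin n))
    [DecidableRel G.Adj] : (G.adjMatrix ℝ).IsHermitian := by
  rw [Matrix.IsHermitian, conjTranspose_eq_transpose_of_trivial]
  exact G.isSymm_adjMatrix

instance comapDecidableAdj {V W : Type*} (G : SimpleGraph W) (f : V → W)
    [h : DecidableRel G.Adj] : DecidableRel (G.comap f).Adj :=
  fun u v => h (f u) (f v)

open Finset

variable {N : ℕ}

lemma sum_dot {ι : Type*} (s : Finset ι) (g : ι → Fin N → ℝ) (x : Fin N → ℝ) :
    (∑ i ∈ s, g i) ⬝ᵥ x = ∑ i ∈ s, g i ⬝ᵥ x := by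
  simp only [dotProduct, Finset.sum_apply, Finset.sum_mul]
  exact Finset.sum_comm

lemma dot_sum {ι : Type*} (s : Finset ι) (g : ι → Fin N → ℝ) (x : Fin N → ℝ) :
    x ⬝ᵥ (∑ i ∈ s, g i) = ∑ i ∈ s, x ⬝ᵥ g i := by
  simp only [dotProduct, Finset.sum_apply, Finset.mul_sum]
  exact Finset.sum_comm

section Orth
variable {M : ℕ} {v : Fin M → Fin N → ℝ}
  (horth : ∀ i j, v i ⬝ᵥ v j = if i = j then 1 else 0)

include horth

lemma orth_li : LinearIndependent ℝ v := by
  rw [Fintype.linearIndependent_iff]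
  intro c hc j
  have h := congrArg (fun x => x ⬝ᵥ v j) hc
  simp only [sum_dot, smul_dotProduct, smul_eq_mul, zero_dotProduct, horth, mul_ite, mul_one,
    mul_zero, Finset.sum_ite_eq' Finset.univ, Finset.mem_univ, if_true] at h
  exact h

lemma finrank_span_orth (s : Finset (Fin M)) :
    Module.finrank ℝ (Submodule.span ℝ (v '' ↑s)) = s.card := by
  have himg : (v '' ↑s : Set (Fin N → ℝ))
      = Set.range (v ∘ (Subtype.val : {x // x ∈ s} → Fin M)) := by
    rw [Set.range_comp, Subtype.range_coe]
  rw [himg, finrank_span_eq_card ((orth_li horth).comp _ Subtype.val_injective)]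
  simp

lemma mem_span_orth {s : Finset (Fin M)} {x : Fin N → ℝ}
    (hx : x ∈ Submodule.span ℝ (v '' ↑s)) :
    ∃ c : Fin M → ℝ, x = ∑ i ∈ s, c i • v i := by
  rw [Finsupp.mem_span_image_iff_linearCombination] at hx
  obtain ⟨l, hl, rfl⟩ := hx
  refine ⟨l, ?_⟩
  rw [Finsupp.linearCombination_apply, Finsupp.sum]
  refine (Finset.sum_subset (f := fun i => l i • v i) ((Finsupp.mem_supported ℝ l).mp hl) ?_)
  intro i _ hi
  simp [Finsupp.notMem_support_iff.mp hi]

lemma dot_self_orth (s : Finset (Fin M)) (c : Fin M → ℝ) :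
    (∑ i ∈ s, c i • v i) ⬝ᵥ (∑ i ∈ s, c i • v i) = ∑ i ∈ s, c i ^ 2 := by
  simp only [sum_dot, dot_sum, smul_dotProduct, dotProduct_smul, horth,
    smul_eq_mul, mul_ite, mul_one, mul_zero]
  refine Finset.sum_congr rfl fun i hi => ?_
  rw [Finset.sum_ite_eq' s i c, if_pos hi]
  ring

lemma dot_mulVec_orth {A : Matrix (Fin N) (Fin N) ℝ} {μ : Fin M → ℝ}
    (heig : ∀ i, A *ᵥ v i = μ i • v i) (s : Finset (Fin M)) (c : Fin M → ℝ) :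
    (∑ i ∈ s, c i • v i) ⬝ᵥ (A *ᵥ ∑ i ∈ s, c i • v i) = ∑ i ∈ s, μ i * c i ^ 2 := by
  have h1 : A *ᵥ ∑ i ∈ s, c i • v i = ∑ i ∈ s, (c i * μ i) • v i := by
    rw [show (A *ᵥ ∑ i ∈ s, c i • v i) = A.mulVecLin (∑ i ∈ s, c i • v i) from rfl, map_sum]
    refine Finset.sum_congr rfl fun i hi => ?_
    rw [LinearMap.map_smul, mulVecLin_apply, heig, smul_smul, mul_comm]
  rw [h1]
  simp only [sum_dot, dot_sum, smul_dotProduct, dotProduct_smul, horth,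
    smul_eq_mul, mul_ite, mul_one, mul_zero]
  refine Finset.sum_congr rfl fun i hi => ?_
  rw [Finset.sum_ite_eq' s i c, if_pos hi]
  ring

end Orth

section Rayleigh
variable {v : Fin N → Fin N → ℝ} {A : Matrix (Fin N) (Fin N) ℝ} {μ : Fin N → ℝ}
  (horth : ∀ i j, v i ⬝ᵥ v j = if i = j then 1 else 0)
  (heig : ∀ i, A *ᵥ v i = μ i • v i)

include horth heig

lemma rayleigh_le_of_mem {s : Finset (Fin N)} {b : ℝ} (hb : ∀ i ∈ s, μ i ≤ b)
    {x : Fin N → ℝ} (hx : x ∈ Submodule.span ℝ (v '' ↑s)) :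
    x ⬝ᵥ (A *ᵥ x) ≤ b * (x ⬝ᵥ x) := by
  obtain ⟨c, rfl⟩ := mem_span_orth horth hx
  rw [dot_mulVec_orth horth heig, dot_self_orth horth, Finset.mul_sum]
  refine Finset.sum_le_sum fun i hi => ?_
  exact mul_le_mul_of_nonneg_right (hb i hi) (sq_nonneg _)

lemma le_rayleigh_of_mem {s : Finset (Fin N)} {b : ℝ} (hb : ∀ i ∈ s, b ≤ μ i)
    {x : Fin N → ℝ} (hx : x ∈ Submodule.span ℝ (v '' ↑s)) :
    b * (x ⬝ᵥ x) ≤ x ⬝ᵥ (A *ᵥ x) := by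
  obtain ⟨c, rfl⟩ := mem_span_orth horth hx
  rw [dot_mulVec_orth horth heig, dot_self_orth horth, Finset.mul_sum]
  refine Finset.sum_le_sum fun i hi => ?_
  exact mul_le_mul_of_nonneg_right (hb i hi) (sq_nonneg _)

end Rayleigh

lemma exists_nonzero_mem_inf (W₁ W₂ : Submodule ℝ (Fin N → ℝ))
    (h : N < Module.finrank ℝ W₁ + Module.finrank ℝ W₂) :
    ∃ x : Fin N → ℝ, x ≠ 0 ∧ x ∈ W₁ ∧ x ∈ W₂ := by
  have h1 := Submodule.finrank_sup_add_finrank_inf_eq W₁ W₂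
  have h2 : Module.finrank ℝ ↥(W₁ ⊔ W₂) ≤ N := by
    simpa using Submodule.finrank_le (W₁ ⊔ W₂)
  have h3 : 0 < Module.finrank ℝ ↥(W₁ ⊓ W₂) := by omega
  rw [Module.finrank_pos_iff] at h3
  obtain ⟨⟨x, hx⟩, hne⟩ := exists_ne (0 : ↥(W₁ ⊓ W₂))
  exact ⟨x, by simpa [Submodule.mk_eq_zero] using hne, hx.1, hx.2⟩

section Ext
variable {m n : ℕ} (f : Fin m ↪ Fin n)

/-- Extension by zero along an embedding, as a linear map. -/
noncomputable def ExtMap : (Fin m → ℝ) →ₗ[ℝ] (Fin n → ℝ) where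
  toFun y := fun j => ∑ i, if f i = j then y i else 0
  map_add' y z := by
    funext j
    simp only [Pi.add_apply, ← Finset.sum_add_distrib]
    exact Finset.sum_congr rfl fun i _ => by split <;> simp
  map_smul' a y := by
    funext j
    simp only [Pi.smul_apply, smul_eq_mul, RingHom.id_apply, Finset.mul_sum]
    exact Finset.sum_congr rfl fun i _ => by split <;> simp

lemma extMap_dot (y : Fin m → ℝ) (x : Fin n → ℝ) :
    ExtMap f y ⬝ᵥ x = y ⬝ᵥ (x ∘ f) := by
  simp only [ExtMap, LinearMap.coe_mk, AddHom.coe_mk, dotProduct, Finset.sum_mul]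
  rw [Finset.sum_comm]
  refine Finset.sum_congr rfl fun i _ => ?_
  rw [Finset.sum_congr rfl fun j _ => (by split <;> simp [*] : (if f i = j then y i else 0) * x j = if f i = j then y i * x (f i) else 0)]
  simp

lemma extMap_apply_emb (y : Fin m → ℝ) (i : Fin m) : ExtMap f y (f i) = y i := by
  simp only [ExtMap, LinearMap.coe_mk, AddHom.coe_mk]
  have : ∀ i' : Fin m, (if f i' = f i then y i' else 0) = if i' = i then y i' else 0 := by
    intro i'; simp [f.injective.eq_iff]
  simp only [this]
  simp

lemma extMap_dot_extMap (y z : Fin m → ℝ) : ExtMap f y ⬝ᵥ ExtMap f z = y ⬝ᵥ z := by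
  rw [extMap_dot]
  refine Finset.sum_congr rfl fun i _ => ?_
  simp [extMap_apply_emb]

lemma extMap_dot_mulVec (B : Matrix (Fin n) (Fin n) ℝ) (y z : Fin m → ℝ) :
    ExtMap f y ⬝ᵥ (B *ᵥ ExtMap f z) = y ⬝ᵥ ((B.submatrix f f) *ᵥ z) := by
  rw [extMap_dot]
  refine Finset.sum_congr rfl fun i _ => ?_
  congr 1
  show (B *ᵥ ExtMap f z) (f i) = _
  rw [mulVec, show B (f i) ⬝ᵥ ExtMap f z = ExtMap f z ⬝ᵥ B (f i) from dotProduct_comm _ _,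
    extMap_dot, mulVec, dotProduct_comm]
  rfl

end Ext

lemma dot_self_pos {x : Fin N → ℝ} (hx : x ≠ 0) : 0 < x ⬝ᵥ x := by
  rcases lt_or_eq_of_le (Finset.sum_nonneg fun i _ => mul_self_nonneg (x i)
    : (0:ℝ) ≤ x ⬝ᵥ x) with h | h
  · exact h
  · exact absurd (dotProduct_self_eq_zero.mp h.symm) hx

section Sorted
variable {A : Matrix (Fin N) (Fin N) ℝ} (hA : A.IsHermitian)

noncomputable def sortedVecs : Fin N → Fin N → ℝ := fun i =>
  ⇑(hA.eigenvectorBasis (Tuple.sort hA.eigenvalues i))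

lemma sortedVecs_orth (i j : Fin N) :
    sortedVecs hA i ⬝ᵥ sortedVecs hA j = if i = j then 1 else 0 := by
  have h := hA.eigenvectorBasis.orthonormal
  rw [orthonormal_iff_ite] at h
  have h2 := h (Tuple.sort hA.eigenvalues i) (Tuple.sort hA.eigenvalues j)
  simp only [EmbeddingLike.apply_eq_iff_eq] at h2
  have h3 : sortedVecs hA i ⬝ᵥ sortedVecs hA j = inner (𝕜 := ℝ)
      (hA.eigenvectorBasis (Tuple.sort hA.eigenvalues i))
      (hA.eigenvectorBasis (Tuple.sort hA.eigenvalues j)) := by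
    simp [sortedVecs, dotProduct, PiLp.inner_apply, RCLike.inner_apply, mul_comm]
  rw [h3, h2]

lemma sortedVecs_eig (i : Fin N) :
    A *ᵥ sortedVecs hA i = sortedEigs A hA i • sortedVecs hA i :=
  hA.mulVec_eigenvectorBasis _

lemma sortedEigs_mono : Monotone (sortedEigs A hA) :=
  Tuple.monotone_sort _

end Sorted

section Interlace
variable {n m : ℕ} (hmn : m ≤ n) (f : Fin m ↪ Fin n)
  (A : Matrix (Fin n) (Fin n) ℝ) (hA : A.IsHermitian) (hAs : (A.submatrix f f).IsHermitian)

lemma u_orth (i j : Fin m) :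
    ExtMap f (sortedVecs hAs i) ⬝ᵥ ExtMap f (sortedVecs hAs j) = if i = j then 1 else 0 := by
  rw [extMap_dot_extMap]; exact sortedVecs_orth hAs i j

lemma mem_uspan {s : Finset (Fin m)} {x : Fin n → ℝ}
    (hx : x ∈ Submodule.span ℝ ((fun i => ExtMap f (sortedVecs hAs i)) '' ↑s)) :
    ∃ y : Fin m → ℝ, y ∈ Submodule.span ℝ (sortedVecs hAs '' ↑s) ∧ ExtMap f y = x := by
  have himg : ((fun i => ExtMap f (sortedVecs hAs i)) '' ↑s : Set (Fin n → ℝ))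
      = ExtMap f '' (sortedVecs hAs '' ↑s) := by
    rw [← Set.image_comp]; rfl
  rw [himg, ← Submodule.map_span] at hx
  exact hx

lemma interlace_low (j : Fin m) :
    sortedEigs A hA ⟨j, lt_of_lt_of_le j.isLt hmn⟩ ≤ sortedEigs (A.submatrix f f) hAs j := by
  set jn : Fin n := ⟨j, lt_of_lt_of_le j.isLt hmn⟩ with hjn
  obtain ⟨x, hx0, hx1, hx2⟩ := exists_nonzero_mem_inf
    (Submodule.span ℝ ((fun i => ExtMap f (sortedVecs hAs i)) '' ↑(Finset.Iic j)))
    (Submodule.span ℝ (sortedVecs hA '' ↑(Finset.Ici jn)))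
    (by
      rw [finrank_span_orth (u_orth f A hAs), finrank_span_orth (sortedVecs_orth hA),
        Fin.card_Iic, Fin.card_Ici]
      have := j.isLt; have : (jn : ℕ) = (j : ℕ) := rfl
      omega)
  obtain ⟨y, hy, rfl⟩ := mem_uspan f A hAs hx1
  have hy0 : y ≠ 0 := fun h => hx0 (by rw [h, map_zero])
  have hpos := dot_self_pos hx0
  have h1 : sortedEigs A hA jn * (ExtMap f y ⬝ᵥ ExtMap f y)
      ≤ ExtMap f y ⬝ᵥ (A *ᵥ ExtMap f y) :=
    le_rayleigh_of_mem (sortedVecs_orth hA) (sortedVecs_eig hA)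
      (fun i hi => sortedEigs_mono hA (Finset.mem_Ici.mp hi)) hx2
  have h2 : y ⬝ᵥ ((A.submatrix f f) *ᵥ y)
      ≤ sortedEigs (A.submatrix f f) hAs j * (y ⬝ᵥ y) :=
    rayleigh_le_of_mem (sortedVecs_orth hAs) (sortedVecs_eig hAs)
      (fun i hi => sortedEigs_mono hAs (Finset.mem_Iic.mp hi)) hy
  rw [extMap_dot_mulVec, extMap_dot_extMap] at h1
  rw [extMap_dot_extMap] at hpos
  exact le_of_mul_le_mul_right (h1.trans h2) hpos

lemma interlace_high (j : Fin m) :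
    sortedEigs (A.submatrix f f) hAs j
      ≤ sortedEigs A hA ⟨(j : ℕ) + n - m, by have := j.isLt; omega⟩ := by
  set jn : Fin n := ⟨(j : ℕ) + n - m, by have := j.isLt; omega⟩ with hjn
  obtain ⟨x, hx0, hx1, hx2⟩ := exists_nonzero_mem_inf
    (Submodule.span ℝ ((fun i => ExtMap f (sortedVecs hAs i)) '' ↑(Finset.Ici j)))
    (Submodule.span ℝ (sortedVecs hA '' ↑(Finset.Iic jn)))
    (by
      rw [finrank_span_orth (u_orth f A hAs), finrank_span_orth (sortedVecs_orth hA),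
        Fin.card_Ici, Fin.card_Iic]
      have := j.isLt; have : (jn : ℕ) = (j : ℕ) + n - m := rfl
      omega)
  obtain ⟨y, hy, rfl⟩ := mem_uspan f A hAs hx1
  have hpos := dot_self_pos hx0
  have h1 : ExtMap f y ⬝ᵥ (A *ᵥ ExtMap f y)
      ≤ sortedEigs A hA jn * (ExtMap f y ⬝ᵥ ExtMap f y) :=
    rayleigh_le_of_mem (sortedVecs_orth hA) (sortedVecs_eig hA)
      (fun i hi => sortedEigs_mono hA (Finset.mem_Iic.mp hi)) hx2
  have h2 : sortedEigs (A.submatrix f f) hAs j * (y ⬝ᵥ y)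
      ≤ y ⬝ᵥ ((A.submatrix f f) *ᵥ y) :=
    le_rayleigh_of_mem (sortedVecs_orth hAs) (sortedVecs_eig hAs)
      (fun i hi => sortedEigs_mono hAs (Finset.mem_Ici.mp hi)) hy
  rw [extMap_dot_mulVec, extMap_dot_extMap] at h1
  rw [extMap_dot_extMap] at hpos
  exact le_of_mul_le_mul_right (h2.trans h1) hpos

end Interlace

section Deg
variable {m : ℕ} (H : SimpleGraph (Fin m)) [DecidableRel H.Adj]

lemma deg_quadform (x : Fin m → ℝ) :
    x ⬝ᵥ (H.degMatrix ℝ *ᵥ x) = ∑ i, (H.degree i : ℝ) * x i ^ 2 := by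
  simp only [SimpleGraph.degMatrix, dotProduct, mulVec_diagonal]
  exact Finset.sum_congr rfl fun i _ => by ring

lemma deg_quadform_le (hm : 0 < m) (x : Fin m → ℝ) :
    x ⬝ᵥ (H.degMatrix ℝ *ᵥ x) ≤ (H.maxDegree : ℝ) * (x ⬝ᵥ x) := by
  rw [deg_quadform, show (x ⬝ᵥ x) = ∑ i, x i ^ 2 from Finset.sum_congr rfl fun i _ => sq (x i) ▸ by ring,
    Finset.mul_sum]
  refine Finset.sum_le_sum fun i _ => mul_le_mul_of_nonneg_right ?_ (sq_nonneg _)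
  exact_mod_cast H.degree_le_maxDegree i

lemma deg_quadform_ge (hm : 0 < m) (x : Fin m → ℝ) :
    (H.minDegree : ℝ) * (x ⬝ᵥ x) ≤ x ⬝ᵥ (H.degMatrix ℝ *ᵥ x) := by
  rw [deg_quadform, show (x ⬝ᵥ x) = ∑ i, x i ^ 2 from Finset.sum_congr rfl fun i _ => sq (x i) ▸ by ring,
    Finset.mul_sum]
  refine Finset.sum_le_sum fun i _ => mul_le_mul_of_nonneg_right ?_ (sq_nonneg _)
  exact_mod_cast H.minDegree_le_degree i

end Deg

lemma comap_adjMatrix {n m : ℕ} (G : SimpleGraph (Fin n)) [DecidableRel G.Adj] (f : Fin m ↪ Fin n)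
    [DecidableRel (G.comap f).Adj] :
    (G.comap f).adjMatrix ℝ = (G.adjMatrix ℝ).submatrix f f := by
  ext i j
  simp [SimpleGraph.adjMatrix, Matrix.submatrix, SimpleGraph.comap]
  congr

/-- Let `G` be a graph on `n` vertices and `H` the induced subgraph on the image of
an embedding `f : Fin m ↪ Fin n`.  Then for every `k ∈ [m]` (here `0`-indexed as
`k : Fin m`, representing the `(k+1)`-st smallest eigenvalue),
`δ(H) − λ_{n−k}(A_G) ≤ λ_{k+1}(L_H) ≤ Δ(H) − λ_{m−k}(A_G)`,
where eigenvalues are listed in non-decreasing order. -/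
theorem lap_eigenvalues_induced_subgraph {n m : ℕ} (hm : 0 < m)
    (G : SimpleGraph (Fin n)) [DecidableRel G.Adj] (f : Fin m ↪ Fin n)
    (k : Fin m) :
    (((G.comap f).minDegree : ℝ) -
        sortedEigs (G.adjMatrix ℝ) (adjMatrix_isHermitian G)
          ⟨n - 1 - k.val, by have := k.isLt; have : m ≤ n := Fintype.card_fin m ▸ Fintype.card_fin n ▸ Fintype.card_le_of_embedding f; omega⟩
      ≤ sortedEigs ((G.comap f).lapMatrix ℝ) (lapMatrix_isHermitian (G.comap f)) k)
    ∧ (sortedEigs ((G.comap f).lapMatrix ℝ) (lapMatrix_isHermitian (G.comap f)) k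
      ≤ ((G.comap f).maxDegree : ℝ) -
        sortedEigs (G.adjMatrix ℝ) (adjMatrix_isHermitian G)
          ⟨m - 1 - k.val, by have := k.isLt; have : m ≤ n := Fintype.card_fin m ▸ Fintype.card_fin n ▸ Fintype.card_le_of_embedding f; omega⟩) := by
  classical
  have hmn : m ≤ n := Fintype.card_fin m ▸ Fintype.card_fin n ▸ Fintype.card_le_of_embedding f
  have hkm := k.isLt
  set H := G.comap f with hHdef
  have hAg := adjMatrix_isHermitian G
  have hL := lapMatrix_isHermitian H
  have hsub : (H.adjMatrix ℝ) = (G.adjMatrix ℝ).submatrix f f := comap_adjMatrix G f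
  have hAs : ((G.adjMatrix ℝ).submatrix f f).IsHermitian := hsub ▸ adjMatrix_isHermitian H
  set km : Fin m := ⟨m - 1 - k.val, by omega⟩ with hkmdef
  -- Laplacian quadratic form splits
  have hsplit : ∀ x : Fin m → ℝ, x ⬝ᵥ (H.lapMatrix ℝ *ᵥ x)
      = x ⬝ᵥ (H.degMatrix ℝ *ᵥ x) - x ⬝ᵥ ((G.adjMatrix ℝ).submatrix f f *ᵥ x) := by
    intro x
    rw [SimpleGraph.lapMatrix, sub_mulVec, dotProduct_sub, hsub]
  constructor
  · -- lower bound
    obtain ⟨x, hx0, hx1, hx2⟩ := exists_nonzero_mem_inf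
      (Submodule.span ℝ (sortedVecs hL '' ↑(Finset.Iic k)))
      (Submodule.span ℝ (sortedVecs hAs '' ↑(Finset.Iic km)))
      (by rw [finrank_span_orth (sortedVecs_orth hL), finrank_span_orth (sortedVecs_orth hAs),
            Fin.card_Iic, Fin.card_Iic]
          have : (km : ℕ) = m - 1 - k.val := rfl
          omega)
    have hpos := dot_self_pos hx0
    have h1 : x ⬝ᵥ (H.lapMatrix ℝ *ᵥ x)
        ≤ sortedEigs (H.lapMatrix ℝ) hL k * (x ⬝ᵥ x) :=
      rayleigh_le_of_mem (sortedVecs_orth hL) (sortedVecs_eig hL)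
        (fun i hi => sortedEigs_mono hL (Finset.mem_Iic.mp hi)) hx1
    have h2 : x ⬝ᵥ ((G.adjMatrix ℝ).submatrix f f *ᵥ x)
        ≤ sortedEigs _ hAs km * (x ⬝ᵥ x) :=
      rayleigh_le_of_mem (sortedVecs_orth hAs) (sortedVecs_eig hAs)
        (fun i hi => sortedEigs_mono hAs (Finset.mem_Iic.mp hi)) hx2
    have h3 := deg_quadform_ge H hm x
    have hkey : (H.minDegree : ℝ) - sortedEigs _ hAs km ≤ sortedEigs (H.lapMatrix ℝ) hL k := by
      have hc : ((H.minDegree : ℝ) - sortedEigs _ hAs km) * (x ⬝ᵥ x)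
          ≤ sortedEigs (H.lapMatrix ℝ) hL k * (x ⬝ᵥ x) := by
        have := hsplit x
        nlinarith
      exact le_of_mul_le_mul_right hc hpos
    have hint := interlace_high hmn f (G.adjMatrix ℝ) hAg hAs km
    have hidx : (⟨(km : ℕ) + n - m, by have := km.isLt; omega⟩ : Fin n)
        = ⟨n - 1 - k.val, by omega⟩ := Fin.ext (by simp only [hkmdef]; omega)
    rw [hidx] at hint
    calc ((H.minDegree : ℝ)) - sortedEigs (G.adjMatrix ℝ) hAg ⟨n - 1 - k.val, by omega⟩
        ≤ (H.minDegree : ℝ) - sortedEigs _ hAs km := by linarith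
      _ ≤ _ := hkey
  · -- upper bound
    obtain ⟨x, hx0, hx1, hx2⟩ := exists_nonzero_mem_inf
      (Submodule.span ℝ (sortedVecs hL '' ↑(Finset.Ici k)))
      (Submodule.span ℝ (sortedVecs hAs '' ↑(Finset.Ici km)))
      (by rw [finrank_span_orth (sortedVecs_orth hL), finrank_span_orth (sortedVecs_orth hAs),
            Fin.card_Ici, Fin.card_Ici]
          have : (km : ℕ) = m - 1 - k.val := rfl
          omega)
    have hpos := dot_self_pos hx0
    have h1 : sortedEigs (H.lapMatrix ℝ) hL k * (x ⬝ᵥ x) ≤ x ⬝ᵥ (H.lapMatrix ℝ *ᵥ x) :=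
      le_rayleigh_of_mem (sortedVecs_orth hL) (sortedVecs_eig hL)
        (fun i hi => sortedEigs_mono hL (Finset.mem_Ici.mp hi)) hx1
    have h2 : sortedEigs _ hAs km * (x ⬝ᵥ x) ≤ x ⬝ᵥ ((G.adjMatrix ℝ).submatrix f f *ᵥ x) :=
      le_rayleigh_of_mem (sortedVecs_orth hAs) (sortedVecs_eig hAs)
        (fun i hi => sortedEigs_mono hAs (Finset.mem_Ici.mp hi)) hx2
    have h3 := deg_quadform_le H hm x
    have hkey : sortedEigs (H.lapMatrix ℝ) hL k ≤ (H.maxDegree : ℝ) - sortedEigs _ hAs km := by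
      have hc : sortedEigs (H.lapMatrix ℝ) hL k * (x ⬝ᵥ x)
          ≤ ((H.maxDegree : ℝ) - sortedEigs _ hAs km) * (x ⬝ᵥ x) := by
        have := hsplit x
        nlinarith
      exact le_of_mul_le_mul_right hc hpos
    have hint := interlace_low hmn f (G.adjMatrix ℝ) hAg hAs km
    have hidx : (⟨(km : ℕ), lt_of_lt_of_le km.isLt hmn⟩ : Fin n)
        = ⟨m - 1 - k.val, by omega⟩ := Fin.ext (by simp only [hkmdef])
    rw [hidx] at hint
    calc sortedEigs (H.lapMatrix ℝ) hL k ≤ (H.maxDegree : ℝ) - sortedEigs _ hAs km := hkey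
      _ ≤ (H.maxDegree : ℝ) - sortedEigs (G.adjMatrix ℝ) hAg ⟨m - 1 - k.val, by omega⟩ := by
          linarith
end

section
/- Let A and B be n×n Hermitian matrices. Then for all k ∈ [n], λ_k(A) + λ₁(B) ≤ λ_k(A+B) ≤ λ_k(A) + λ_n(B), where λ₁ ≤ ... ≤ λ_n denote eigenvalues in non-decreasing order. -/
open Matrix

/-- The eigenvalues of a complex Hermitian matrix, listed in non-decreasing order. -/
noncomputable def sortedEigsC {n : ℕ} (A : Matrix (Fin n) (Fin n) ℂ)
    (hA : A.IsHermitian) : Fin n → ℝ :=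
  hA.eigenvalues ∘ Tuple.sort hA.eigenvalues

namespace WeylAux

open Module Submodule

variable {n : ℕ}

/-- Matrix-vector multiplication as a map on Euclidean space. -/
noncomputable def mv (A : Matrix (Fin n) (Fin n) ℂ) (x : EuclideanSpace ℂ (Fin n)) :
    EuclideanSpace ℂ (Fin n) :=
  (WithLp.equiv 2 _).symm (A *ᵥ (WithLp.equiv 2 _ x))

variable {A : Matrix (Fin n) (Fin n) ℂ} (hA : A.IsHermitian)

lemma inner_mv_eig (x : EuclideanSpace ℂ (Fin n)) (i : Fin n) :
    (inner ℂ (hA.eigenvectorBasis i) (mv A x) : ℂ)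
      = (hA.eigenvalues i : ℂ) * inner ℂ (hA.eigenvectorBasis i) x := by
  have h0 : (inner ℂ (hA.eigenvectorBasis i) (mv A x) : ℂ)
      = star (⇑(hA.eigenvectorBasis i)) ⬝ᵥ (A *ᵥ (WithLp.equiv 2 _ x)) := by
    rw [EuclideanSpace.inner_eq_star_dotProduct, dotProduct_comm]; rfl
  have h1 : star (⇑(hA.eigenvectorBasis i)) ᵥ* A
      = (hA.eigenvalues i : ℂ) • star (⇑(hA.eigenvectorBasis i)) := by
    have := congrArg star (hA.mulVec_eigenvectorBasis i)
    rw [star_mulVec, hA.eq] at this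
    rw [this, star_smul]; simp
  rw [h0, dotProduct_mulVec, h1, smul_dotProduct]
  rw [EuclideanSpace.inner_eq_star_dotProduct, dotProduct_comm, smul_eq_mul]; rfl

lemma re_inner_mv (x : EuclideanSpace ℂ (Fin n)) :
    (inner ℂ x (mv A x) : ℂ).re
      = ∑ i, hA.eigenvalues i * Complex.normSq (inner ℂ (hA.eigenvectorBasis i) x : ℂ) := by
  rw [← (hA.eigenvectorBasis).sum_inner_mul_inner x (mv A x)]
  rw [Complex.re_sum]
  refine Finset.sum_congr rfl fun i _ => ?_
  rw [inner_mv_eig hA x i]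
  set c : ℂ := (inner ℂ (hA.eigenvectorBasis i) x : ℂ) with hc
  have hxb : (inner ℂ x (hA.eigenvectorBasis i) : ℂ) = starRingEnd ℂ c := by
    rw [hc, inner_conj_symm]
  rw [hxb]
  have : (starRingEnd ℂ) c * ((hA.eigenvalues i : ℂ) * c)
      = ((hA.eigenvalues i * Complex.normSq c : ℝ) : ℂ) := by
    push_cast
    rw [Complex.normSq_eq_conj_mul_self]
    ring
  rw [this, Complex.ofReal_re]

lemma norm_sq_eq_sum (b : OrthonormalBasis (Fin n) ℂ (EuclideanSpace ℂ (Fin n)))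
    (x : EuclideanSpace ℂ (Fin n)) :
    ‖x‖ ^ 2 = ∑ i, Complex.normSq (inner ℂ (b i) x : ℂ) := by
  have h := b.sum_inner_mul_inner x x
  rw [← inner_self_eq_norm_sq (𝕜 := ℂ) x, ← h, map_sum]
  refine Finset.sum_congr rfl fun i _ => ?_
  have hxb : (inner ℂ x (b i) : ℂ) = starRingEnd ℂ (inner ℂ (b i) x : ℂ) := by
    rw [inner_conj_symm]
  rw [hxb, ← Complex.normSq_eq_conj_mul_self]
  simp

lemma inner_eq_zero_of_span (b : OrthonormalBasis (Fin n) ℂ (EuclideanSpace ℂ (Fin n)))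
    (S : Finset (Fin n)) {x : EuclideanSpace ℂ (Fin n)}
    (hx : x ∈ span ℂ (b '' S)) {i : Fin n} (hi : i ∉ S) :
    (inner ℂ (b i) x : ℂ) = 0 := by
  induction hx using Submodule.span_induction with
  | mem y hy =>
      obtain ⟨j, hj, rfl⟩ := hy
      exact b.orthonormal.2 (fun h => hi (h ▸ hj))
  | zero => simp
  | add y z _ _ hy hz => rw [inner_add_right, hy, hz, add_zero]
  | smul a y _ hy => rw [inner_smul_right, hy, mul_zero]

lemma normSq_zero_off (S : Finset (Fin n)) {x : EuclideanSpace ℂ (Fin n)}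
    (hx : x ∈ span ℂ (hA.eigenvectorBasis '' S)) :
    ∀ i ∉ S, Complex.normSq (inner ℂ (hA.eigenvectorBasis i) x : ℂ) = 0 := by
  intro i hi
  rw [inner_eq_zero_of_span hA.eigenvectorBasis S hx hi]
  simp

lemma re_eq_sum_S (S : Finset (Fin n)) {x : EuclideanSpace ℂ (Fin n)}
    (hx : x ∈ span ℂ (hA.eigenvectorBasis '' S)) :
    (inner ℂ x (mv A x) : ℂ).re
      = ∑ i ∈ S, hA.eigenvalues i * Complex.normSq (inner ℂ (hA.eigenvectorBasis i) x : ℂ) := by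
  rw [re_inner_mv hA x]
  exact (Finset.sum_subset S.subset_univ
    (fun i _ hi => by rw [normSq_zero_off hA S hx i hi, mul_zero])).symm

lemma norm_eq_sum_S (S : Finset (Fin n)) {x : EuclideanSpace ℂ (Fin n)}
    (hx : x ∈ span ℂ (hA.eigenvectorBasis '' S)) :
    ‖x‖ ^ 2 = ∑ i ∈ S, Complex.normSq (inner ℂ (hA.eigenvectorBasis i) x : ℂ) := by
  rw [norm_sq_eq_sum hA.eigenvectorBasis x]
  exact (Finset.sum_subset S.subset_univ (fun i _ hi => normSq_zero_off hA S hx i hi)).symm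

lemma rayleigh_le (S : Finset (Fin n)) {M : ℝ}
    (hM : ∀ i ∈ S, hA.eigenvalues i ≤ M)
    {x : EuclideanSpace ℂ (Fin n)} (hx : x ∈ span ℂ (hA.eigenvectorBasis '' S)) :
    (inner ℂ x (mv A x) : ℂ).re ≤ M * ‖x‖ ^ 2 := by
  rw [re_eq_sum_S hA S hx, norm_eq_sum_S hA S hx, Finset.mul_sum]
  exact Finset.sum_le_sum fun i hi =>
    mul_le_mul_of_nonneg_right (hM i hi) (Complex.normSq_nonneg _)

lemma rayleigh_ge (S : Finset (Fin n)) {m : ℝ}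
    (hm : ∀ i ∈ S, m ≤ hA.eigenvalues i)
    {x : EuclideanSpace ℂ (Fin n)} (hx : x ∈ span ℂ (hA.eigenvectorBasis '' S)) :
    m * ‖x‖ ^ 2 ≤ (inner ℂ x (mv A x) : ℂ).re := by
  rw [re_eq_sum_S hA S hx, norm_eq_sum_S hA S hx, Finset.mul_sum]
  exact Finset.sum_le_sum fun i hi =>
    mul_le_mul_of_nonneg_right (hm i hi) (Complex.normSq_nonneg _)

lemma exists_mem_inf (U W : Submodule ℂ (EuclideanSpace ℂ (Fin n)))
    (h : n < finrank ℂ U + finrank ℂ W) : ∃ x, x ∈ U ∧ x ∈ W ∧ x ≠ 0 := by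
  have hd := Submodule.finrank_sup_add_finrank_inf_eq U W
  have hle : finrank ℂ (U ⊔ W : Submodule ℂ _) ≤ n := by
    have := Submodule.finrank_le (U ⊔ W)
    rwa [finrank_euclideanSpace_fin] at this
  have hpos : 0 < finrank ℂ (U ⊓ W : Submodule ℂ _) := by omega
  have hne : (U ⊓ W : Submodule ℂ _) ≠ ⊥ := by
    intro hbot
    rw [hbot, finrank_bot] at hpos
    omega
  obtain ⟨x, hx, hx0⟩ := Submodule.exists_mem_ne_zero_of_ne_bot hne
  exact ⟨x, hx.1, hx.2, hx0⟩

lemma finrank_span_eigs (b : OrthonormalBasis (Fin n) ℂ (EuclideanSpace ℂ (Fin n)))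
    (S : Finset (Fin n)) : finrank ℂ (span ℂ (b '' S)) = S.card := by
  have hli : LinearIndependent ℂ (fun i : S => b i) :=
    b.orthonormal.linearIndependent.comp _ Subtype.val_injective
  have hr : Set.range (fun i : S => b i) = b '' S := by
    ext y; simp
  rw [← hr, finrank_span_eq_card hli, Fintype.card_coe]

lemma mv_add (B : Matrix (Fin n) (Fin n) ℂ) (x : EuclideanSpace ℂ (Fin n)) :
    mv (A + B) x = mv A x + mv B x := by
  unfold mv
  rw [add_mulVec]
  rfl

lemma mem_span_univ (b : OrthonormalBasis (Fin n) ℂ (EuclideanSpace ℂ (Fin n)))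
    (x : EuclideanSpace ℂ (Fin n)) :
    x ∈ span ℂ (b '' (Finset.univ : Finset (Fin n))) := by
  rw [Finset.coe_univ, Set.image_univ, ← b.coe_toBasis, b.toBasis.span_eq]
  trivial

lemma sorted_apply (hA : A.IsHermitian) (j : Fin n) :
    hA.eigenvalues (Tuple.sort hA.eigenvalues j) = sortedEigsC A hA j := rfl

lemma eig_le_sorted_last (hn : 0 < n) (hA : A.IsHermitian) (i : Fin n) :
    hA.eigenvalues i ≤ sortedEigsC A hA ⟨n - 1, Nat.sub_lt hn Nat.one_pos⟩ := by
  set σ := Tuple.sort hA.eigenvalues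
  have h1 : hA.eigenvalues i = sortedEigsC A hA (σ.symm i) := by
    rw [← sorted_apply hA, Equiv.apply_symm_apply]
  rw [h1]
  refine Tuple.monotone_sort hA.eigenvalues ?_
  rw [Fin.le_def]
  have := (σ.symm i).isLt
  simp only []
  omega

lemma sorted_zero_le_eig (hn : 0 < n) (hA : A.IsHermitian) (i : Fin n) :
    sortedEigsC A hA ⟨0, hn⟩ ≤ hA.eigenvalues i := by
  set σ := Tuple.sort hA.eigenvalues
  have h1 : hA.eigenvalues i = sortedEigsC A hA (σ.symm i) := by
    rw [← sorted_apply hA, Equiv.apply_symm_apply]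
  rw [h1]
  refine Tuple.monotone_sort hA.eigenvalues ?_
  rw [Fin.le_def]
  simp

lemma weyl_upper (hn : 0 < n) (A B : Matrix (Fin n) (Fin n) ℂ)
    (hA : A.IsHermitian) (hB : B.IsHermitian) (k : Fin n) :
    sortedEigsC (A + B) (hA.add hB) k
      ≤ sortedEigsC A hA k + sortedEigsC B hB ⟨n - 1, Nat.sub_lt hn Nat.one_pos⟩ := by
  have hC : (A + B).IsHermitian := hA.add hB
  set σA := Tuple.sort hA.eigenvalues
  set σC := Tuple.sort hC.eigenvalues
  set SA : Finset (Fin n) := (Finset.Iic k).image σA with hSA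
  set SC : Finset (Fin n) := (Finset.Ici k).image σC with hSC
  set U := span ℂ (hA.eigenvectorBasis '' SA)
  set W := span ℂ (hC.eigenvectorBasis '' SC)
  have hdim : n < Module.finrank ℂ U + Module.finrank ℂ W := by
    have h1 : Module.finrank ℂ U = k.1 + 1 := by
      rw [finrank_span_eigs, hSA, Finset.card_image_of_injective _ σA.injective, Fin.card_Iic]
    have h2 : Module.finrank ℂ W = n - k.1 := by
      rw [finrank_span_eigs, hSC, Finset.card_image_of_injective _ σC.injective, Fin.card_Ici]
    have := k.isLt
    omega
  obtain ⟨x, hxU, hxW, hx0⟩ := exists_mem_inf U W hdim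
  have hxpos : 0 < ‖x‖ ^ 2 := pow_pos (norm_pos_iff.mpr hx0) 2
  have h1 : (inner ℂ x (mv A x) : ℂ).re ≤ sortedEigsC A hA k * ‖x‖ ^ 2 := by
    refine rayleigh_le hA SA ?_ hxU
    intro i hi
    obtain ⟨j, hj, rfl⟩ := Finset.mem_image.mp hi
    exact Tuple.monotone_sort hA.eigenvalues (Finset.mem_Iic.mp hj)
  have h2 : (inner ℂ x (mv B x) : ℂ).re ≤ sortedEigsC B hB ⟨n - 1, Nat.sub_lt hn Nat.one_pos⟩ * ‖x‖ ^ 2 := by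
    refine rayleigh_le hB Finset.univ ?_ (mem_span_univ _ x)
    intro i _
    exact eig_le_sorted_last hn hB i
  have h3 : sortedEigsC (A + B) hC k * ‖x‖ ^ 2 ≤ (inner ℂ x (mv (A + B) x) : ℂ).re := by
    refine rayleigh_ge hC SC ?_ hxW
    intro i hi
    obtain ⟨j, hj, rfl⟩ := Finset.mem_image.mp hi
    exact Tuple.monotone_sort hC.eigenvalues (Finset.mem_Ici.mp hj)
  have h4 : (inner ℂ x (mv (A + B) x) : ℂ).re
      = (inner ℂ x (mv A x) : ℂ).re + (inner ℂ x (mv B x) : ℂ).re := by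
    rw [mv_add, inner_add_right]
    simp
  nlinarith [h1, h2, h3, h4, hxpos]

lemma weyl_lower (hn : 0 < n) (A B : Matrix (Fin n) (Fin n) ℂ)
    (hA : A.IsHermitian) (hB : B.IsHermitian) (k : Fin n) :
    sortedEigsC A hA k + sortedEigsC B hB ⟨0, hn⟩
      ≤ sortedEigsC (A + B) (hA.add hB) k := by
  have hC : (A + B).IsHermitian := hA.add hB
  set σA := Tuple.sort hA.eigenvalues
  set σC := Tuple.sort hC.eigenvalues
  set SA : Finset (Fin n) := (Finset.Ici k).image σA with hSA
  set SC : Finset (Fin n) := (Finset.Iic k).image σC with hSC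
  set U := span ℂ (hA.eigenvectorBasis '' SA)
  set W := span ℂ (hC.eigenvectorBasis '' SC)
  have hdim : n < Module.finrank ℂ U + Module.finrank ℂ W := by
    have h1 : Module.finrank ℂ U = n - k.1 := by
      rw [finrank_span_eigs, hSA, Finset.card_image_of_injective _ σA.injective, Fin.card_Ici]
    have h2 : Module.finrank ℂ W = k.1 + 1 := by
      rw [finrank_span_eigs, hSC, Finset.card_image_of_injective _ σC.injective, Fin.card_Iic]
    have := k.isLt
    omega
  obtain ⟨x, hxU, hxW, hx0⟩ := exists_mem_inf U W hdim
  have hxpos : 0 < ‖x‖ ^ 2 := pow_pos (norm_pos_iff.mpr hx0) 2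
  have h1 : sortedEigsC A hA k * ‖x‖ ^ 2 ≤ (inner ℂ x (mv A x) : ℂ).re := by
    refine rayleigh_ge hA SA ?_ hxU
    intro i hi
    obtain ⟨j, hj, rfl⟩ := Finset.mem_image.mp hi
    exact Tuple.monotone_sort hA.eigenvalues (Finset.mem_Ici.mp hj)
  have h2 : sortedEigsC B hB ⟨0, hn⟩ * ‖x‖ ^ 2 ≤ (inner ℂ x (mv B x) : ℂ).re := by
    refine rayleigh_ge hB Finset.univ ?_ (mem_span_univ _ x)
    intro i _
    exact sorted_zero_le_eig hn hB i
  have h3 : (inner ℂ x (mv (A + B) x) : ℂ).re ≤ sortedEigsC (A + B) hC k * ‖x‖ ^ 2 := by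
    refine rayleigh_le hC SC ?_ hxW
    intro i hi
    obtain ⟨j, hj, rfl⟩ := Finset.mem_image.mp hi
    exact Tuple.monotone_sort hC.eigenvalues (Finset.mem_Iic.mp hj)
  have h4 : (inner ℂ x (mv (A + B) x) : ℂ).re
      = (inner ℂ x (mv A x) : ℂ).re + (inner ℂ x (mv B x) : ℂ).re := by
    rw [mv_add, inner_add_right]
    simp
  nlinarith [h1, h2, h3, h4, hxpos]

end WeylAux

/-- Weyl's inequality: for `n×n` Hermitian matrices `A` and `B` and every `k`,
`λ_k(A) + λ₁(B) ≤ λ_k(A+B) ≤ λ_k(A) + λ_n(B)`, eigenvalues in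
non-decreasing order. -/
theorem weyl_inequality {n : ℕ} (hn : 0 < n)
    (A B : Matrix (Fin n) (Fin n) ℂ)
    (hA : A.IsHermitian) (hB : B.IsHermitian) :
    ∀ k : Fin n,
      sortedEigsC A hA k + sortedEigsC B hB ⟨0, hn⟩
          ≤ sortedEigsC (A + B) (hA.add hB) k
      ∧ sortedEigsC (A + B) (hA.add hB) k
          ≤ sortedEigsC A hA k + sortedEigsC B hB ⟨n - 1, by omega⟩ := by
  intro k
  exact ⟨WeylAux.weyl_lower hn A B hA hB k, WeylAux.weyl_upper hn A B hA hB k⟩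
end

section
/- Let G be any graph and let C be a shortest odd cycle in G. Then there is no path p in G connecting two vertices u, v on C such that both of the two arcs of C between u and v are strictly longer than p. -/
private lemma path_edge_end {V : Type*} {G : SimpleGraph V} {z x : V}
    (t : G.Walk z x) (ht : t.IsPath) (he : s(x, z) ∈ t.edges) : t.length = 1 := by
  induction t with
  | nil => simp at he
  | @cons a b c h t ih =>
    rw [SimpleGraph.Walk.edges_cons, List.mem_cons] at he
    rw [SimpleGraph.Walk.cons_isPath_iff] at ht
    rcases he with he | he
    · rw [Sym2.eq_iff] at he
      rcases he with ⟨hxa, hab⟩ | ⟨hxb, hza⟩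
      · -- x = a : path from a to x with a ∉ t.support, but x ∈ t.support (end)
        exact absurd (hxa ▸ t.end_mem_support) ht.2
      · -- x = b : t : G.Walk b c = G.Walk x x is a path, so nil
        subst hxb
        have : t.length = 0 := by
          by_contra h0
          have := SimpleGraph.Walk.isCycle_def t
          -- a path from x to x has nodup support; but support starts and ends with x
          have hn := ht.1.support_nodup
          cases t with
          | nil => simp at h0
          | cons h' t' =>
            simp only [SimpleGraph.Walk.support_cons, List.nodup_cons] at hn
            exact hn.1 t'.end_mem_support
        simp [this]
    · -- s(x,z) ∈ t.edges, but a = z ∉ t.support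
      exact absurd (t.snd_mem_support_of_mem_edges he) ht.2

private lemma exists_odd_cycle_of_odd_closed_walk {V : Type*} [DecidableEq V]
    (G : SimpleGraph V) :
    ∀ (n : ℕ) {x : V} (w : G.Walk x x), w.length = n → Odd n →
      ∃ (y : V) (d : G.Walk y y), d.IsCycle ∧ Odd d.length ∧ d.length ≤ n := by
  intro n
  induction n using Nat.strong_induction_on with
  | _ n ih =>
    intro x w hlen hodd
    cases w with
    | nil => simp only [SimpleGraph.Walk.length_nil] at hlen
             rw [← hlen, Nat.odd_iff] at hodd; simp at hodd
    | @cons _ z _ h t =>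
      by_cases hpath : t.IsPath
      · by_cases hedge : s(x, z) ∈ t.edges
        · -- then t.length = 1, so n = 2, contradicting oddness
          have h1 : t.length = 1 := path_edge_end t hpath hedge
          have : n = 2 := by simp [← hlen, h1]
          rw [this] at hodd
          exact absurd hodd (by decide)
        · -- the walk is a cycle
          refine ⟨x, SimpleGraph.Walk.cons h t, ?_, hlen ▸ hodd, hlen ▸ le_refl _⟩
          exact (SimpleGraph.Walk.cons_isCycle_iff t h).2 ⟨hpath, hedge⟩
      · -- t has a repeated vertex; split into two shorter closed walks
        have hnd : ¬ t.support.Nodup := fun hn => hpath ((SimpleGraph.Walk.isPath_def t).2 hn)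
        obtain ⟨y, hy2⟩ : ∃ y, 2 ≤ t.support.count y := by
          by_contra hcon
          push_neg at hcon
          exact hnd (List.nodup_iff_count_le_one.2 fun a => by have := hcon a; omega)
        have hy : y ∈ t.support := by
          rw [← List.count_pos_iff]; omega
        set t1 := t.takeUntil y hy with ht1
        set rest := t.dropUntil y hy with hrest
        have hspec : t1.append rest = t := t.take_spec hy
        have hsup : t.support = t1.support ++ rest.support.tail := by
          rw [← hspec, SimpleGraph.Walk.support_append]
        have hc1 : t1.support.count y = 1 := t.count_support_takeUntil_eq_one hy
        have hytail : y ∈ rest.support.tail := by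
          by_contra hcon
          rw [hsup, List.count_append, hc1, List.count_eq_zero_of_not_mem hcon] at hy2
          omega
        clear hrest ht1 hsup hc1 hy2 hnd hpath
        clear_value t1 rest
        clear hy
        revert hspec
        cases rest with
        | nil => simp at hytail
        | @cons _ z' _ h' s =>
          intro hspec
          -- rest = cons h' s, h' : G.Adj y z', s : G.Walk z' x
          simp only [SimpleGraph.Walk.support_cons, List.tail_cons] at hytail
          set s1 := s.takeUntil y hytail with hs1
          set s2 := s.dropUntil y hytail with hs2
          have hsspec : s1.append s2 = s := s.take_spec hytail
          -- closed walk B at y : cons h' s1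
          set B : G.Walk y y := SimpleGraph.Walk.cons h' s1 with hB
          -- closed walk A at x : cons h (t1.append s2)
          set A : G.Walk x x := SimpleGraph.Walk.cons h (t1.append s2) with hA
          have hlensum : A.length + B.length = n := by
            have h1 : t1.length + (SimpleGraph.Walk.cons h' s).length = t.length := by
              rw [← hspec]; simp [SimpleGraph.Walk.length_append]
            have h2 : s1.length + s2.length = s.length := by
              rw [← hsspec]; simp [SimpleGraph.Walk.length_append]
            simp only [hA, hB, SimpleGraph.Walk.length_cons,
              SimpleGraph.Walk.length_append] at *
            omega
          have hApos : 1 ≤ A.length := by simp [hA]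
          have hBpos : 1 ≤ B.length := by simp [hB]
          have : Odd A.length ∨ Odd B.length := by
            rcases Nat.even_or_odd A.length with hA' | hA'
            · right
              rcases hodd with ⟨k, hk⟩
              rcases hA' with ⟨m, hm⟩
              exact ⟨k - m, by omega⟩
            · left; exact hA'
          rcases this with hO | hO
          · obtain ⟨y', d, hd1, hd2, hd3⟩ := ih A.length (by omega) A rfl hO
            exact ⟨y', d, hd1, hd2, by omega⟩
          · obtain ⟨y', d, hd1, hd2, hd3⟩ := ih B.length (by omega) B rfl hO
            exact ⟨y', d, hd1, hd2, by omega⟩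

/-- Let `C` be a shortest odd cycle in a graph `G`.  Then there is no path `p`
connecting two vertices `u, v` on `C` such that both arcs of `C` between `u`
and `v` are strictly longer than `p`.  The two arcs are obtained by rotating
the cycle to start at `u` and splitting it at `v`. -/
theorem shortest_odd_cycle_no_shortcut {V : Type*} [DecidableEq V]
    (G : SimpleGraph V) {x : V} (c : G.Walk x x)
    (hc : c.IsCycle) (hodd : Odd c.length)
    (hmin : ∀ {y : V} (d : G.Walk y y), d.IsCycle → Odd d.length →
      c.length ≤ d.length)
    {u v : V} (hu : u ∈ c.support) (hv : v ∈ (c.rotate u hu).support)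
    (p : G.Walk u v) (hp : p.IsPath) :
    ¬ (p.length < ((c.rotate u hu).takeUntil v hv).length ∧
       p.length < ((c.rotate u hu).dropUntil v hv).length) := by
  rintro ⟨h1, h2⟩
  set r := c.rotate u hu with hr
  set a := r.takeUntil v hv with ha
  set b := r.dropUntil v hv with hb
  have hspec : a.append b = r := r.take_spec hv
  have hrlen : r.length = c.length := by
    have hsum0 : (c.takeUntil u hu).length + (c.dropUntil u hu).length = c.length := by
      conv_rhs => rw [← c.take_spec hu]
      rw [SimpleGraph.Walk.length_append]
    rw [hr, SimpleGraph.Walk.rotate, SimpleGraph.Walk.length_append]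
    omega
  have hsum : a.length + b.length = c.length := by
    rw [← hrlen, ← hspec, SimpleGraph.Walk.length_append]
  have hparity : Odd (p.length + a.length) ∨ Odd (p.length + b.length) := by
    rcases hodd with ⟨k, hk⟩
    rcases Nat.even_or_odd (p.length + a.length) with ⟨m, hm⟩ | hO
    · right; exact ⟨p.length + k - m, by omega⟩
    · left; exact hO
  rcases hparity with hO | hO
  · -- closed walk p.reverse ++ a at v
    set d : G.Walk v v := p.reverse.append a with hd
    have hdlen : d.length = p.length + a.length := by
      simp [hd, SimpleGraph.Walk.length_append, SimpleGraph.Walk.length_reverse]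
    obtain ⟨y, e, he1, he2, he3⟩ :=
      exists_odd_cycle_of_odd_closed_walk G d.length d rfl (hdlen ▸ hO)
    have := hmin e he1 he2
    omega
  · -- closed walk b ++ p at v
    set d : G.Walk v v := b.append p with hd
    have hdlen : d.length = p.length + b.length := by
      simp [hd, SimpleGraph.Walk.length_append]; omega
    obtain ⟨y, e, he1, he2, he3⟩ :=
      exists_odd_cycle_of_odd_closed_walk G d.length d rfl (hdlen ▸ hO)
    have := hmin e he1 he2
    omega
end

section
/- Let G be an α-expander on n vertices and let A, B ⊆ V(G) be vertex sets with |A|, |B| ≥ t for some t > 0. Then G contains at least tα/(1+α) pairwise vertex-disjoint paths, each having one endpoint in A and the other in B. -/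
set_option linter.unusedSectionVars false

section MengerLists
variable {V : Type*} [DecidableEq V]

/-- `l` is a walk (as a list) from `A` to `B` w.r.t. relation `R`. -/
def Conn (R : V → V → Prop) (A B : Finset V) (l : List V) : Prop :=
  ∃ a b, l.Chain' R ∧ l.head? = some a ∧ l.getLast? = some b ∧ a ∈ A ∧ b ∈ B

/-- `S` separates `A` from `B` w.r.t. relation `R`. -/
def SepR (R : V → V → Prop) (A B S : Finset V) : Prop :=
  ∀ l, Conn R A B l → ∃ s ∈ S, s ∈ l

lemma Conn.ne_nil {R : V → V → Prop} {A B : Finset V} {l : List V} (h : Conn R A B l) :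
    l ≠ [] := by
  obtain ⟨a, b, -, h, -⟩ := h
  intro hl; subst hl; simp at h

/-- a suffix starting at a given element -/
lemma suffix_at_mem {x : V} : ∀ {l : List V}, x ∈ l → ∃ s, s <:+ l ∧ s.head? = some x := by
  intro l hl
  induction l with
  | nil => simp at hl
  | cons a r ih =>
    rcases eq_or_ne a x with rfl | hax
    · exact ⟨a :: r, List.suffix_rfl, rfl⟩
    · have : x ∈ r := by
        rcases List.mem_cons.1 hl with h | h
        · exact absurd h.symm hax
        · exact h
      obtain ⟨s, hs, hh⟩ := ih this
      exact ⟨s, hs.trans (List.suffix_cons a r), hh⟩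

/-- truncate a list at first hit of `T`. -/
lemma trunc_first {T : Finset V} :
    ∀ {l : List V}, (∃ t ∈ T, t ∈ l) →
    ∃ l' a, l' <+: l ∧ l' ≠ [] ∧ l'.head? = l.head? ∧ l'.getLast? = some a ∧ a ∈ T ∧
      (∀ x ∈ l', x ∈ T → x = a) := by
  intro l hl
  induction l with
  | nil => obtain ⟨t, -, ht⟩ := hl; simp at ht
  | cons c r ih =>
    by_cases hc : c ∈ T
    · exact ⟨[c], c, ⟨r, rfl⟩, by simp, rfl, rfl, hc, by simp⟩
    · have hr : ∃ t ∈ T, t ∈ r := by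
        obtain ⟨t, htT, htl⟩ := hl
        rcases List.mem_cons.1 htl with h | h
        · exact absurd (h ▸ htT) hc
        · exact ⟨t, htT, h⟩
      obtain ⟨l', a, hpre, hne, hh, hlast, haT, huniq⟩ := ih hr
      refine ⟨c :: l', a, ?_, by simp, rfl, ?_, haT, ?_⟩
      · obtain ⟨tl, rfl⟩ := hpre
        exact ⟨tl, rfl⟩
      · obtain ⟨hd, tl2, rfl⟩ := List.exists_cons_of_ne_nil hne
        rw [List.getLast?_cons_cons]
        exact hlast
      · intro x hx hxT
        rcases List.mem_cons.1 hx with rfl | h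
        · exact absurd hxT hc
        · exact huniq x h hxT
end MengerLists

section Chunk2
variable {V : Type*} [DecidableEq V]


/-- extract a duplicate-free walk from any walk, same endpoints. -/
lemma exists_nodup_chain {R : V → V → Prop} :
    ∀ l : List V, l.Chain' R →
    ∃ l' : List V, l'.Chain' R ∧ l'.Nodup ∧ l'.head? = l.head? ∧ l'.getLast? = l.getLast? ∧
      ∀ x ∈ l', x ∈ l := by
  intro l
  induction l with
  | nil => exact fun _ => ⟨[], by simp [List.Chain']⟩
  | cons c r ih =>
    intro hc
    have hr : r.Chain' R := hc.tail
    obtain ⟨r', hr'c, hr'nd, hr'h, hr'l, hr'sub⟩ := ih hr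
    by_cases hcr : c ∈ r'
    · -- take the suffix of r' starting at c
      obtain ⟨s, hs, hsh⟩ := suffix_at_mem hcr
      have hsne : s ≠ [] := by intro h; rw [h] at hsh; simp at hsh
      refine ⟨s, hr'c.suffix hs, hr'nd.sublist hs.sublist, ?_, ?_, ?_⟩
      · rw [hsh]; rfl
      · obtain ⟨p, rfl⟩ := hs
        rw [List.getLast?_append] at hr'l
        have h1 : r.getLast? = s.getLast? := by
          rw [← hr'l]
          rcases hl : s.getLast? with _ | z
          · exact absurd (List.getLast?_eq_none_iff.1 hl) hsne
          · rfl
        have hrne : r ≠ [] := List.ne_nil_of_mem (hr'sub c hcr)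
        obtain ⟨e, r₀, rfl⟩ := List.exists_cons_of_ne_nil hrne
        rw [List.getLast?_cons_cons, ← h1]
      · intro x hx
        exact List.mem_cons_of_mem c (hr'sub x (hs.subset hx))
    · refine ⟨c :: r', ?_, by simp [hr'nd, hcr], rfl, ?_, ?_⟩
      · rcases r' with _ | ⟨d, r''⟩
        · simp [List.Chain']
        · simp only [List.Chain', List.isChain_cons_cons]
          refine ⟨?_, hr'c⟩
          rcases r with _ | ⟨e, r₀⟩
          · simp at hr'h
          · have : d = e := by simpa using hr'h
            subst this
            exact (List.isChain_cons_cons.1 hc).1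
      · rcases r' with _ | ⟨d, r''⟩
        · simp at hr'l ⊢
          rcases r with _ | ⟨e, r₀⟩
          · rfl
          · simp at hr'h
        · rw [List.getLast?_cons_cons, hr'l]
          rcases r with _ | ⟨e, r₀⟩
          · simp at hr'h
          · rw [List.getLast?_cons_cons]
      · intro x hx
        rcases List.mem_cons.1 hx with rfl | h
        · exact List.mem_cons_self
        · exact List.mem_cons_of_mem c (hr'sub x h)

/-- if a chain for `R` is not a chain for the arc-deleted relation, it uses the arc. -/
lemma chain'_split_step {R : V → V → Prop} {x y : V} :
    ∀ {l : List V}, l.Chain' R →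
      ¬ l.Chain' (fun u w => R u w ∧ ¬(u = x ∧ w = y)) →
      ∃ p s, l = p ++ x :: y :: s := by
  intro l
  induction l with
  | nil => intro _ h; exact absurd List.isChain_nil h
  | cons c r ih =>
    intro hc h
    rcases r with _ | ⟨d, r'⟩
    · exact absurd (List.isChain_singleton c) h
    · simp only [List.Chain', List.isChain_cons_cons] at hc
      by_cases hcd : c = x ∧ d = y
      · exact ⟨[], r', by rw [hcd.1, hcd.2]; rfl⟩
      · have h2 : ¬ (d :: r').Chain' (fun u w => R u w ∧ ¬(u = x ∧ w = y)) :=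
          fun hch => h (List.isChain_cons_cons.2 ⟨⟨hc.1, hcd⟩, hch⟩)
        obtain ⟨p, s, hps⟩ := ih hc.2 h2
        exact ⟨c :: p, s, by rw [hps]; rfl⟩

/-- strengthening: if `x` occurs only possibly as the last element, the chain avoids arc (x,y). -/
lemma chain'_strengthen {R : V → V → Prop} {x y : V} :
    ∀ {l : List V}, l.Chain' R → x ∉ l.dropLast →
      l.Chain' (fun u w => R u w ∧ ¬(u = x ∧ w = y)) := by
  intro l
  induction l with
  | nil => simp [List.Chain']
  | cons c r ih =>
    intro hc hx
    rcases r with _ | ⟨d, r'⟩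
    · simp [List.Chain']
    · simp only [List.Chain', List.isChain_cons_cons] at hc ⊢
      rw [List.dropLast_cons₂, List.mem_cons] at hx
      push_neg at hx
      exact ⟨⟨hc.1, fun hh => hx.1 hh.1.symm⟩, ih hc.2 hx.2⟩
end Chunk2

section Chunk3
variable {V : Type*} [DecidableEq V]

/-- truncate a list at the last hit of `T` (keep the suffix). -/
lemma trunc_last {T : Finset V} {l : List V} (h : ∃ t ∈ T, t ∈ l) :
    ∃ l' a, l' <:+ l ∧ l' ≠ [] ∧ l'.getLast? = l.getLast? ∧ l'.head? = some a ∧ a ∈ T ∧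
      ∀ x ∈ l', x ∈ T → x = a := by
  obtain ⟨l'', a, hpre, hne, hh, hlast, haT, huniq⟩ :=
    trunc_first (T := T) (l := l.reverse) (by simpa using h)
  obtain ⟨tl, htl⟩ := hpre
  refine ⟨l''.reverse, a, ⟨tl.reverse, ?_⟩, by simpa using hne, ?_, ?_, haT, ?_⟩
  · rw [← List.reverse_append, htl, List.reverse_reverse]
  · rw [List.getLast?_reverse, hh, List.head?_reverse]
  · rw [List.head?_reverse]; exact hlast
  · intro x hx hxT
    exact huniq x (by simpa using hx) hxT

lemma sep_insert {R : V → V → Prop} {x y : V} {A B S : Finset V}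
    (hS : SepR (fun u w => R u w ∧ ¬(u = x ∧ w = y)) A B S) (l : List V)
    (hl : Conn R A B l) : (∃ s ∈ S, s ∈ l) ∨ (x ∈ l ∧ y ∈ l) := by
  obtain ⟨a, b, hch, hh, hlast, ha, hb⟩ := hl
  obtain ⟨l', hch', hnd', hh', hlast', hsub⟩ := exists_nodup_chain l hch
  by_cases hc : l'.Chain' (fun u w => R u w ∧ ¬(u = x ∧ w = y))
  · obtain ⟨s, hsS, hsl⟩ := hS l' ⟨a, b, hc, hh' ▸ hh, hlast' ▸ hlast, ha, hb⟩
    exact Or.inl ⟨s, hsS, hsub s hsl⟩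
  · obtain ⟨p, s, hps⟩ := chain'_split_step hch' hc
    refine Or.inr ⟨hsub x ?_, hsub y ?_⟩ <;> rw [hps] <;> simp

lemma menger_base {R : V → V → Prop} {A B : Finset V} {k : ℕ}
    (hE : ¬ ∃ x y : V, R x y) (hsep : ∀ S : Finset V, SepR R A B S → k ≤ S.card) :
    ∃ P : List (List V), P.length = k ∧ (∀ l ∈ P, Conn R A B l ∧ l.Nodup) ∧
      P.Pairwise List.Disjoint := by
  have hAB : SepR R A B (A ∩ B) := by
    rintro l ⟨a, b, hch, hh, hlast, ha, hb⟩
    rcases l with _ | ⟨c, r⟩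
    · simp at hh
    · have hca : c = a := by simpa using hh
      subst hca
      rcases r with _ | ⟨d, r'⟩
      · have hba : c = b := by simpa using hlast
        subst hba
        exact ⟨c, Finset.mem_inter.2 ⟨ha, hb⟩, by simp⟩
      · exact absurd ⟨c, d, (List.isChain_cons_cons.1 hch).1⟩ hE
  have hk : k ≤ (A ∩ B).card := hsep _ hAB
  refine ⟨((A ∩ B).toList.take k).map (fun v => [v]), ?_, ?_, ?_⟩
  · rw [List.length_map, List.length_take, Finset.length_toList]
    exact Nat.min_eq_left hk
  · intro l hl
    obtain ⟨v, hv, rfl⟩ := List.mem_map.1 hl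
    have hv2 : v ∈ A ∩ B := by
      rw [← Finset.mem_toList]
      exact (List.take_subset _ _) hv
    exact ⟨⟨v, v, List.isChain_singleton v, rfl, rfl, (Finset.mem_inter.1 hv2).1,
      (Finset.mem_inter.1 hv2).2⟩, List.nodup_singleton v⟩
  · rw [List.pairwise_map]
    have : ((A ∩ B).toList.take k).Nodup :=
      (Finset.nodup_toList _).sublist (List.take_sublist _ _)
    exact this.pairwise_of_forall_ne (fun a ha b hb hab => by
      intro z hz hz2
      simp only [List.mem_singleton] at hz hz2
      exact hab (hz ▸ hz2 ▸ rfl))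

lemma pairwise_of_attach_map {γ δ : Type*} {P : List γ} {Rr : γ → γ → Prop}
    (hP : P.Pairwise Rr) (f : ∀ a, a ∈ P → δ) {Rl : δ → δ → Prop}
    (h : ∀ a ha b hb, Rr a b → Rl (f a ha) (f b hb)) :
    (P.attach.map (fun z => f z.1 z.2)).Pairwise Rl := by
  rw [List.pairwise_map]
  have h2 : P.attach.Pairwise (fun a b => Rr a.1 b.1) := by
    have := hP
    rw [← List.attach_map_subtype_val P, List.pairwise_map] at this
    exact this
  exact h2.imp_of_mem (fun {a b} _ _ hr => h a.1 a.2 b.1 b.2 hr)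
end Chunk3

section Chunk4
variable {V : Type*} [DecidableEq V]

lemma helper_prefix {la qa : List V} {v e : V} (hpre : qa <+: la) (hnd : la.Nodup)
    (hqa : qa.getLast? = some v) (hla : la.getLast? = some e) (he : e ∈ qa) : v = e := by
  obtain ⟨r, rfl⟩ := hpre
  rcases r with _ | ⟨c, r'⟩
  · rw [List.append_nil] at hla
    rw [hqa] at hla
    exact Option.some.inj hla
  · exfalso
    have h1 : (c :: r').getLast? = some ((c :: r').getLast (by simp)) :=
      List.getLast?_eq_getLast_of_ne_nil (by simp)
    rw [List.getLast?_append, h1] at hla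
    have h2 : (c :: r').getLast (by simp) = e := by simpa using hla
    have her : e ∈ c :: r' := h2 ▸ List.getLast_mem _
    exact (List.disjoint_of_nodup_append hnd) he her

lemma helper_suffix {lb qb : List V} {v c : V} (hsuf : qb <:+ lb) (hnd : lb.Nodup)
    (hqb : qb.head? = some v) (hlb : lb.head? = some c) (hc : c ∈ qb) : v = c := by
  obtain ⟨r, rfl⟩ := hsuf
  rcases r with _ | ⟨d, r'⟩
  · rw [List.nil_append] at hlb
    rw [hqb] at hlb
    exact Option.some.inj hlb
  · exfalso
    have hdc : d = c := by simpa using hlb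
    have hcm : c ∈ d :: r' := by rw [hdc]; exact List.mem_cons_self
    exact (List.disjoint_of_nodup_append hnd) hcm hc

/-- Two segments glue to give an `A`–`B` walk avoiding `S`; contradiction with separator. -/
lemma seg_contra {R' : V → V → Prop} {A B S : Finset V} (hSsep : SepR R' A B S)
    {qa qb : List V} {v : V}
    (hca : qa.Chain' R') (hcb : qb.Chain' R')
    (hha : ∃ a ∈ A, qa.head? = some a) (hqa : qa.getLast? = some v)
    (hqb : qb.head? = some v) (hlb : ∃ b ∈ B, qb.getLast? = some b)
    (hSa : ∀ s ∈ S, s ∉ qa) (hSb : ∀ s ∈ S, s ∉ qb) : False := by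
  obtain ⟨a, haA, hahead⟩ := hha
  obtain ⟨b, hbB, hblast⟩ := hlb
  obtain ⟨tl, rfl⟩ : ∃ tl, qb = v :: tl := by
    rcases qb with _ | ⟨w, tl⟩
    · simp at hqb
    · exact ⟨tl, by simpa using (Option.some.inj hqb) ▸ rfl⟩
  rcases tl with _ | ⟨w, tl'⟩
  · -- qb = [v], so v = b ∈ B
    have hvb : v = b := by simpa using hblast
    obtain ⟨s, hsS, hsq⟩ := hSsep qa ⟨a, v, hca, hahead, hqa, haA, hvb ▸ hbB⟩
    exact hSa s hsS hsq
  · have hjun : R' v w := (List.isChain_cons_cons.1 hcb).1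
    have hconn : Conn R' A B (qa ++ w :: tl') := by
      refine ⟨a, b, ?_, ?_, ?_, haA, hbB⟩
      · simp only [List.Chain', List.isChain_append]
        refine ⟨hca, hcb.tail, ?_⟩
        intro p hp q hq
        rw [hqa] at hp
        have : w = q := by simpa using hq
        subst this
        exact (Option.some.inj hp) ▸ hjun
      · rw [List.head?_append, hahead]; rfl
      · rw [List.getLast?_append]
        rw [List.getLast?_cons_cons] at hblast
        rw [hblast]; rfl
    obtain ⟨s, hsS, hsq⟩ := hSsep _ hconn
    rcases List.mem_append.1 hsq with h | h
    · exact hSa s hsS h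
    · exact hSb s hsS (List.mem_cons_of_mem v h)
end Chunk4

section Chunk5
variable {V : Type*} [DecidableEq V]

lemma cross_lemma {R' : V → V → Prop} {A B S Sx Sy : Finset V}
    (hSsep : SepR R' A B S) (hSx : S ⊆ Sx) (hSy : S ⊆ Sy)
    {la lb : List V} {a e c b : V}
    (hca : la.Chain' R') (hnda : la.Nodup) (hhead : la.head? = some a) (haA : a ∈ A)
    (hlaste : la.getLast? = some e) (heSx : e ∈ Sx) (huniqa : ∀ v ∈ la, v ∈ Sx → v = e)
    (hcb : lb.Chain' R') (hndb : lb.Nodup) (hheadc : lb.head? = some c) (hcSy : c ∈ Sy)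
    (hlastb : lb.getLast? = some b) (hbB : b ∈ B) (huniqb : ∀ v ∈ lb, v ∈ Sy → v = c)
    {v : V} (hvla : v ∈ la) (hvlb : v ∈ lb) : v = e ∧ v = c := by
  have buildb : v ∉ Sy → ∃ qb : List V, qb.Chain' R' ∧ qb.head? = some v ∧
      qb.getLast? = some b ∧ ∀ s ∈ S, s ∉ qb := by
    intro hvSy
    obtain ⟨qb, v', hsuf, hne, hlast', hhead', hv'T, _⟩ :=
      trunc_last (T := ({v} : Finset V)) (l := lb) ⟨v, by simp, hvlb⟩
    have hv'v : v' = v := by simpa using hv'T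
    rw [hv'v] at hhead'
    refine ⟨qb, hcb.suffix hsuf, hhead', by rw [hlast']; exact hlastb, ?_⟩
    intro s hsS hsq
    have hsc : s = c := huniqb s (hsuf.subset hsq) (hSy hsS)
    have : v = c := helper_suffix hsuf hndb hhead' hheadc (by rw [← hsc]; exact hsq)
    exact hvSy (by rw [this]; exact hcSy)
  have builda : v ∉ Sx → ∃ qa : List V, qa.Chain' R' ∧ qa.head? = some a ∧
      qa.getLast? = some v ∧ ∀ s ∈ S, s ∉ qa := by
    intro hvSx
    obtain ⟨qa, v', hpre, hne, hhead', hlast', hv'T, _⟩ :=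
      trunc_first (T := ({v} : Finset V)) (l := la) ⟨v, by simp, hvla⟩
    have hv'v : v' = v := by simpa using hv'T
    rw [hv'v] at hlast'
    refine ⟨qa, hca.prefix hpre, by rw [hhead']; exact hhead, hlast', ?_⟩
    intro s hsS hsq
    have hse : s = e := huniqa s (hpre.subset hsq) (hSx hsS)
    have : v = e := helper_prefix hpre hnda hlast' hlaste (by rw [← hse]; exact hsq)
    exact hvSx (by rw [this]; exact heSx)
  have h1 : v = e := by
    by_contra hve
    have hvSx : v ∉ Sx := fun h => hve (huniqa v hvla h)
    obtain ⟨qa, hqa1, hqa2, hqa3, hqa4⟩ := builda hvSx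
    by_cases hvc : v = c
    · refine seg_contra hSsep hqa1 hcb ⟨a, haA, hqa2⟩ hqa3 (by rw [hvc]; exact hheadc)
        ⟨b, hbB, hlastb⟩ hqa4 ?_
      intro s hsS hslb
      have hsc : s = c := huniqb s hslb (hSy hsS)
      exact hvSx (hSx (by rw [hvc, ← hsc]; exact hsS))
    · have hvSy : v ∉ Sy := fun h => hvc (huniqb v hvlb h)
      obtain ⟨qb, hqb1, hqb2, hqb3, hqb4⟩ := buildb hvSy
      exact seg_contra hSsep hqa1 hqb1 ⟨a, haA, hqa2⟩ hqa3 hqb2 ⟨b, hbB, hqb3⟩ hqa4 hqb4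
  refine ⟨h1, ?_⟩
  by_contra hvc
  have hvSy : v ∉ Sy := fun h => hvc (huniqb v hvlb h)
  obtain ⟨qb, hqb1, hqb2, hqb3, hqb4⟩ := buildb hvSy
  refine seg_contra hSsep hca hqb1 ⟨a, haA, hhead⟩ (by rw [← h1] at hlaste; exact hlaste)
    hqb2 ⟨b, hbB, hqb3⟩ ?_ hqb4
  intro s hsS hsla
  have hse : s = e := huniqa s hsla (hSx hsS)
  have hvS : v ∈ S := by rw [h1, ← hse]; exact hsS
  exact hvc (huniqb v hvlb (hSy hvS))
end Chunk5

section Chunk6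
variable {V : Type*} [Fintype V] [DecidableEq V]

/-- number of arcs of a relation -/
noncomputable def esize (R : V → V → Prop) : ℕ := {p : V × V | R p.1 p.2}.ncard

lemma esize_lt {R : V → V → Prop} {x y : V} (hxy : R x y) :
    esize (fun u w => R u w ∧ ¬(u = x ∧ w = y)) < esize R := by
  apply Set.ncard_lt_ncard _ (Set.toFinite _)
  constructor
  · rintro ⟨u, w⟩ ⟨h, -⟩
    exact h
  · intro h
    exact (h (show ((x, y) : V × V) ∈ {p : V × V | R p.1 p.2} from hxy)).2 ⟨rfl, rfl⟩

theorem mengerR :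
    ∀ (n : ℕ) (R : V → V → Prop) (A B : Finset V) (k : ℕ),
    esize R ≤ n →
    (∀ S : Finset V, SepR R A B S → k ≤ S.card) →
    ∃ P : List (List V), P.length = k ∧ (∀ l ∈ P, Conn R A B l ∧ l.Nodup) ∧
      P.Pairwise List.Disjoint := by
  intro n
  induction n with
  | zero =>
    intro R A B k hsize hsep
    refine menger_base ?_ hsep
    rintro ⟨x, y, hxy⟩
    have : 0 < esize R := (Set.ncard_pos (Set.toFinite _)).2 ⟨(x, y), hxy⟩
    omega
  | succ n ih =>
    intro R A B k hsize hsep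
    by_cases hE : ∃ x y : V, R x y
    · obtain ⟨x, y, hxy⟩ := hE
      set R' : V → V → Prop := fun u w => R u w ∧ ¬(u = x ∧ w = y) with hR'
      have hsize' : esize R' ≤ n := by
        have h2 := esize_lt hxy
        rw [← hR'] at h2
        omega
      by_cases hS : ∀ S : Finset V, SepR R' A B S → k ≤ S.card
      · obtain ⟨P, hlen, hmem, hpair⟩ := ih R' A B k hsize' hS
        refine ⟨P, hlen, fun l hl => ?_, hpair⟩
        obtain ⟨⟨a, b, hch, h1, h2, h3, h4⟩, hnd⟩ := hmem l hl
        exact ⟨⟨a, b, hch.imp (fun _ _ h => h.1), h1, h2, h3, h4⟩, hnd⟩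
      · push_neg at hS
        obtain ⟨S, hSsep, hScard⟩ := hS
        have hsepx : SepR R A B (insert x S) := by
          intro l hl
          rcases sep_insert hSsep l hl with ⟨s, hs, hsl⟩ | ⟨hx, -⟩
          · exact ⟨s, Finset.mem_insert_of_mem hs, hsl⟩
          · exact ⟨x, Finset.mem_insert_self x S, hx⟩
        have hsepy : SepR R A B (insert y S) := by
          intro l hl
          rcases sep_insert hSsep l hl with ⟨s, hs, hsl⟩ | ⟨-, hy⟩
          · exact ⟨s, Finset.mem_insert_of_mem hs, hsl⟩
          · exact ⟨y, Finset.mem_insert_self y S, hy⟩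
        have hkx : k ≤ (insert x S).card := hsep _ hsepx
        have hky : k ≤ (insert y S).card := hsep _ hsepy
        have hxS : x ∉ S := by
          intro h
          rw [Finset.insert_eq_self.2 h] at hkx
          omega
        have hyS : y ∉ S := by
          intro h
          rw [Finset.insert_eq_self.2 h] at hky
          omega
        have hcx : (insert x S).card = S.card + 1 := Finset.card_insert_of_notMem hxS
        have hcy : (insert y S).card = S.card + 1 := Finset.card_insert_of_notMem hyS
        have hkcard : S.card + 1 = k := by omega
        set Sx := insert x S with hSxdef
        set Sy := insert y S with hSydef
        have hSsubx : S ⊆ Sx := Finset.subset_insert x S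
        have hSsuby : S ⊆ Sy := Finset.subset_insert y S
        have hxSx : x ∈ Sx := Finset.mem_insert_self x S
        have hySy : y ∈ Sy := Finset.mem_insert_self y S
        -- Claim 1 : separators of A–Sx in R' are separators of A–B in R
        have claim1 : ∀ T : Finset V, SepR R' A Sx T → SepR R A B T := by
          intro T hT l hl
          obtain ⟨a, b, hch, hh, hlast, ha, hb⟩ := hl
          obtain ⟨l', hch', hnd', hh', hlast', hsub⟩ := exists_nodup_chain l hch
          by_cases hc : l'.Chain' R'
          · obtain ⟨s, hsS, hsl⟩ := hSsep l' ⟨a, b, hc, hh'.trans hh, hlast'.trans hlast, ha, hb⟩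
            obtain ⟨q, c, hqpre, hqne, hqh, hqlast, hcSx, -⟩ :=
              trunc_first (T := Sx) (l := l') ⟨s, hSsubx hsS, hsl⟩
            obtain ⟨t, htT, htq⟩ := hT q
              ⟨a, c, hc.prefix hqpre, hqh.trans (hh'.trans hh), hqlast, ha, hcSx⟩
            exact ⟨t, htT, hsub t (hqpre.subset htq)⟩
          · obtain ⟨p, s, hps⟩ := chain'_split_step hch' hc
            have hqpre : p ++ [x] <+: l' := ⟨y :: s, by rw [hps]; simp⟩
            have hxp : x ∉ p := by
              intro hxp
              have hd := List.disjoint_of_nodup_append (hps ▸ hnd')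
              exact hd hxp (by simp)
            have hchq : (p ++ [x]).Chain' R' := by
              refine chain'_strengthen (hch'.prefix hqpre) ?_
              rw [List.dropLast_concat]
              exact hxp
            have hqh : (p ++ [x]).head? = l'.head? := by
              rw [hps, List.head?_append, List.head?_append]; rfl
            have hqlast : (p ++ [x]).getLast? = some x := by
              rw [List.getLast?_append]; rfl
            obtain ⟨t, htT, htq⟩ := hT (p ++ [x])
              ⟨a, x, hchq, hqh.trans (hh'.trans hh), hqlast, ha, hxSx⟩
            exact ⟨t, htT, hsub t (hqpre.subset htq)⟩
        -- Claim 2 : separators of Sy–B in R' are separators of A–B in R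
        have claim2 : ∀ T : Finset V, SepR R' Sy B T → SepR R A B T := by
          intro T hT l hl
          obtain ⟨a, b, hch, hh, hlast, ha, hb⟩ := hl
          obtain ⟨l', hch', hnd', hh', hlast', hsub⟩ := exists_nodup_chain l hch
          by_cases hc : l'.Chain' R'
          · obtain ⟨s, hsS, hsl⟩ := hSsep l' ⟨a, b, hc, hh'.trans hh, hlast'.trans hlast, ha, hb⟩
            obtain ⟨q, c, hqsuf, hqne, hqlast, hqh, hcSy, -⟩ :=
              trunc_last (T := Sy) (l := l') ⟨s, hSsuby hsS, hsl⟩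
            obtain ⟨t, htT, htq⟩ := hT q
              ⟨c, b, hc.suffix hqsuf, hqh, hqlast.trans (hlast'.trans hlast), hcSy, hb⟩
            exact ⟨t, htT, hsub t (hqsuf.subset htq)⟩
          · obtain ⟨p, s, hps⟩ := chain'_split_step hch' hc
            have hqsuf : y :: s <:+ l' := ⟨p ++ [x], by rw [hps]; simp⟩
            have hxq : x ∉ y :: s := by
              intro hxq
              have hd := List.disjoint_of_nodup_append
                (by rw [hps] at hnd'; simpa using hnd' : ((p ++ [x]) ++ y :: s).Nodup)
              exact hd (by simp) hxq
            have hchq : (y :: s).Chain' R' := by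
              refine chain'_strengthen (hch'.suffix hqsuf) ?_
              intro hx2
              exact hxq (List.dropLast_subset _ hx2)
            have hqlast : (y :: s).getLast? = l'.getLast? := by
              obtain ⟨z, hz⟩ : ∃ z, (y :: s).getLast? = some z :=
                ⟨(y :: s).getLast (by simp), List.getLast?_eq_getLast_of_ne_nil (by simp)⟩
              have h1 : (x :: y :: s).getLast? = (y :: s).getLast? := List.getLast?_cons_cons
              rw [hps, List.getLast?_append, h1, hz]; rfl
            obtain ⟨t, htT, htq⟩ := hT (y :: s)
              ⟨y, b, hchq, rfl, hqlast.trans (hlast'.trans hlast), hySy, hb⟩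
            exact ⟨t, htT, hsub t (hqsuf.subset htq)⟩
        -- two path systems from the induction hypothesis
        obtain ⟨PA₀, hPA₀len, hPA₀mem, hPA₀pair⟩ :=
          ih R' A Sx k hsize' (fun T hT => hsep T (claim1 T hT))
        obtain ⟨PB₀, hPB₀len, hPB₀mem, hPB₀pair⟩ :=
          ih R' Sy B k hsize' (fun T hT => hsep T (claim2 T hT))
        -- truncate the A-side paths at their first meeting with Sx
        have hexA : ∀ l, l ∈ PA₀ → ∃ l' : List V, (∀ v ∈ l', v ∈ l) ∧
            ∃ a e, l'.Chain' R' ∧ l'.Nodup ∧ l'.head? = some a ∧ a ∈ A ∧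
              l'.getLast? = some e ∧ e ∈ Sx ∧ ∀ v ∈ l', v ∈ Sx → v = e := by
          intro l hl
          obtain ⟨⟨a, e0, hch, hh, hlast, ha, he0⟩, hnd⟩ := hPA₀mem l hl
          obtain ⟨q, e, hqpre, hqne, hqh, hqlast, heSx, huniq⟩ :=
            trunc_first (T := Sx) (l := l)
              ⟨e0, he0, List.mem_of_mem_getLast? (by rw [hlast]; rfl)⟩
          exact ⟨q, fun v hv => hqpre.subset hv, a, e, hch.prefix hqpre,
            hnd.sublist hqpre.sublist, hqh.trans hh, ha, hqlast, heSx, huniq⟩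
        choose fA hfA using hexA
        set PA : List (List V) := PA₀.attach.map (fun z => fA z.1 z.2) with hPAdef
        have hPAlen : PA.length = k := by
          rw [hPAdef, List.length_map, List.length_attach, hPA₀len]
        have hPAmem : ∀ la ∈ PA, ∃ a e, la.Chain' R' ∧ la.Nodup ∧ la.head? = some a ∧ a ∈ A ∧
            la.getLast? = some e ∧ e ∈ Sx ∧ ∀ v ∈ la, v ∈ Sx → v = e := by
          intro la hla
          rw [hPAdef] at hla
          obtain ⟨⟨l, hl⟩, -, rfl⟩ := List.mem_map.1 hla
          exact (hfA l hl).2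
        have hPApair : PA.Pairwise List.Disjoint :=
          pairwise_of_attach_map hPA₀pair _ (fun a ha b hb hd v hv hv' =>
            hd ((hfA a ha).1 v hv) ((hfA b hb).1 v hv'))
        -- truncate the B-side paths at their last meeting with Sy
        have hexB : ∀ l, l ∈ PB₀ → ∃ l' : List V, (∀ v ∈ l', v ∈ l) ∧
            ∃ c b, l'.Chain' R' ∧ l'.Nodup ∧ l'.head? = some c ∧ c ∈ Sy ∧
              l'.getLast? = some b ∧ b ∈ B ∧ ∀ v ∈ l', v ∈ Sy → v = c := by
          intro l hl
          obtain ⟨⟨c0, b, hch, hh, hlast, hc0, hb⟩, hnd⟩ := hPB₀mem l hl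
          obtain ⟨q, c, hqsuf, hqne, hqlast, hqh, hcSy, huniq⟩ :=
            trunc_last (T := Sy) (l := l)
              ⟨c0, hc0, List.mem_of_mem_head? (by rw [hh]; rfl)⟩
          exact ⟨q, fun v hv => hqsuf.subset hv, c, b, hch.suffix hqsuf,
            hnd.sublist hqsuf.sublist, hqh, hcSy, hqlast.trans hlast, hb, huniq⟩
        choose fB hfB using hexB
        set PB : List (List V) := PB₀.attach.map (fun z => fB z.1 z.2) with hPBdef
        have hPBlen : PB.length = k := by
          rw [hPBdef, List.length_map, List.length_attach, hPB₀len]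
        have hPBmem : ∀ lb ∈ PB, ∃ c b, lb.Chain' R' ∧ lb.Nodup ∧ lb.head? = some c ∧ c ∈ Sy ∧
            lb.getLast? = some b ∧ b ∈ B ∧ ∀ v ∈ lb, v ∈ Sy → v = c := by
          intro lb hlb
          rw [hPBdef] at hlb
          obtain ⟨⟨l, hl⟩, -, rfl⟩ := List.mem_map.1 hlb
          exact (hfB l hl).2
        have hPBpair : PB.Pairwise List.Disjoint :=
          pairwise_of_attach_map hPB₀pair _ (fun a ha b hb hd v hv hv' =>
            hd ((hfB a ha).1 v hv) ((hfB b hb).1 v hv'))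
        -- the heads of PB cover all of Sy
        have hcover : ∀ c ∈ Sy, ∃ lb ∈ PB, lb.head? = some c := by
          intro c hc
          by_contra hno
          push_neg at hno
          have hpairNe : PB.Pairwise (fun l1 l2 => l1.head? ≠ l2.head?) := by
            refine hPBpair.imp_of_mem ?_
            intro l1 l2 h1 h2 hd heq
            obtain ⟨c1, b1, -, -, hh1, -, -, -, -⟩ := hPBmem l1 h1
            exact hd (List.mem_of_mem_head? (by rw [hh1]; rfl))
              (List.mem_of_mem_head? (by rw [← heq, hh1]; rfl))
          have hndheads : (PB.map List.head?).Nodup :=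
            List.Pairwise.map _ (fun a b h => h) hpairNe
          have hsubset : (PB.map List.head?).toFinset ⊆ (Sy.erase c).image some := by
            intro o ho
            rw [List.mem_toFinset] at ho
            obtain ⟨lb, hlb, rfl⟩ := List.mem_map.1 ho
            obtain ⟨c1, b1, -, -, hh1, hc1, -, -, -⟩ := hPBmem lb hlb
            rw [hh1]
            refine Finset.mem_image_of_mem some (Finset.mem_erase.2 ⟨?_, hc1⟩)
            intro hcc
            exact hno lb hlb (by rw [hh1, hcc])
          have hcard1 : (PB.map List.head?).toFinset.card = k := by
            rw [List.toFinset_card_of_nodup hndheads, List.length_map, hPBlen]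
          have hcard2 : ((Sy.erase c).image some).card ≤ Sy.card - 1 := by
            calc ((Sy.erase c).image some).card ≤ (Sy.erase c).card := Finset.card_image_le
            _ = Sy.card - 1 := Finset.card_erase_of_mem hc
          have hfin := Finset.card_le_card hsubset
          omega
        set ψ : V → V := fun e => if e = x then y else e with hψdef
        have hψSy : ∀ e ∈ Sx, ψ e ∈ Sy := by
          intro e he
          simp only [hψdef]
          by_cases hex : e = x
          · rw [if_pos hex]; exact hySy
          · rw [if_neg hex]
            exact hSsuby (Finset.mem_of_mem_insert_of_ne he hex)
        have hψne : ∀ e₁ ∈ Sx, ∀ e₂ ∈ Sx, e₁ ≠ e₂ → ψ e₂ ≠ e₁ := by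
          intro e₁ h1 e₂ h2 hne heq
          simp only [hψdef] at heq
          by_cases hex : e₂ = x
          · rw [if_pos hex] at heq
            rcases Finset.mem_insert.1 h1 with h | h
            · exact hne (by rw [h, hex])
            · rw [← heq] at h
              exact hyS h
          · rw [if_neg hex] at heq
            exact hne heq.symm
        have hψinj : ∀ e₁ ∈ Sx, ∀ e₂ ∈ Sx, ψ e₁ = ψ e₂ → e₁ = e₂ := by
          intro e₁ h1 e₂ h2 heq
          simp only [hψdef] at heq
          by_cases h1x : e₁ = x <;> by_cases h2x : e₂ = x
          · rw [h1x, h2x]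
          · rw [if_pos h1x, if_neg h2x] at heq
            have h2S : e₂ ∈ S := Finset.mem_of_mem_insert_of_ne h2 h2x
            rw [← heq] at h2S
            exact absurd h2S hyS
          · rw [if_neg h1x, if_pos h2x] at heq
            have h1S : e₁ ∈ S := Finset.mem_of_mem_insert_of_ne h1 h1x
            rw [heq] at h1S
            exact absurd h1S hyS
          · rw [if_neg h1x, if_neg h2x] at heq
            exact heq
        -- glue each A-side path with its B-side partner
        have hexG : ∀ la, la ∈ PA → ∃ g : List V, Conn R A B g ∧ g.Nodup ∧
            ∃ e lb, la.getLast? = some e ∧ lb ∈ PB ∧ lb.head? = some (ψ e) ∧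
              (∀ v ∈ g, v ∈ la ∨ v ∈ lb) := by
          intro la hla
          obtain ⟨a, e, hch, hnd, hh, haA, hlaste, heSx, huniqa⟩ := hPAmem la hla
          obtain ⟨lb, hlbPB, hlbh⟩ := hcover (ψ e) (hψSy e heSx)
          obtain ⟨c, b, hchb, hndb, hhb, hcSy, hlastb, hbB, huniqb⟩ := hPBmem lb hlbPB
          have hce : c = ψ e := by
            rw [hhb] at hlbh
            exact Option.some.inj hlbh
          have hcross : ∀ v ∈ la, v ∈ lb → v = e ∧ v = c :=
            fun v hv hv' => cross_lemma hSsep hSsubx hSsuby hch hnd hh haA hlaste heSx huniqa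
              hchb hndb hhb hcSy hlastb hbB huniqb hv hv'
          by_cases hcase : e = x ∧ ¬ x = y
          · have hψe : ψ e = y := by simp only [hψdef, if_pos hcase.1]
            refine ⟨la ++ lb, ⟨a, b, ?_, ?_, ?_, haA, hbB⟩, ?_, e, lb, hlaste, hlbPB, hlbh, ?_⟩
            · simp only [List.Chain', List.isChain_append]
              refine ⟨hch.imp (fun _ _ h => h.1), hchb.imp (fun _ _ h => h.1), ?_⟩
              intro p hp q hq
              rw [hlaste] at hp
              rw [hhb] at hq
              have hpe : p = e := by symm; simpa using hp
              have hqc : q = c := by symm; simpa using hq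
              rw [hpe, hqc, hce, hψe, hcase.1]
              exact hxy
            · rw [List.head?_append, hh]; rfl
            · rw [List.getLast?_append, hlastb]; rfl
            · rw [List.nodup_append]
              refine ⟨hnd, hndb, ?_⟩
              intro v hv v' hv' hvv
              subst hvv
              obtain ⟨h1, h2⟩ := hcross v hv hv'
              apply hcase.2
              rw [← hcase.1, ← h1, h2, hce, hψe]
            · intro v hv
              exact List.mem_append.1 hv
          · have hψe : ψ e = e := by
              simp only [hψdef]
              by_cases hex : e = x
              · rw [if_pos hex, hex]
                by_contra hyx
                exact hcase ⟨hex, fun hxy2 => hyx hxy2.symm⟩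
              · rw [if_neg hex]
            have hce2 : c = e := by rw [hce, hψe]
            obtain ⟨tl, rfl⟩ : ∃ tl, lb = c :: tl := by
              rcases lb with _ | ⟨w, tl⟩
              · simp at hhb
              · exact ⟨tl, by rw [show w = c by simpa using hhb]⟩
            rcases tl with _ | ⟨w, tl'⟩
            · have hbc : b = c := by symm; simpa using hlastb
              refine ⟨la, ⟨a, e, hch.imp (fun _ _ h => h.1), hh, hlaste, haA, ?_⟩, hnd,
                e, [c], hlaste, hlbPB, hlbh, fun v hv => Or.inl hv⟩
              rw [← hce2, ← hbc]
              exact hbB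
            · have hjun : R' c w := (List.isChain_cons_cons.1 hchb).1
              refine ⟨la ++ w :: tl', ⟨a, b, ?_, ?_, ?_, haA, hbB⟩, ?_,
                e, c :: w :: tl', hlaste, hlbPB, hlbh, ?_⟩
              · simp only [List.Chain', List.isChain_append]
                refine ⟨hch.imp (fun _ _ h => h.1), (hchb.tail).imp (fun _ _ h => h.1), ?_⟩
                intro p hp q hq
                rw [hlaste] at hp
                have hpe : p = e := by symm; simpa using hp
                have hqw : q = w := by symm; simpa using hq
                rw [hpe, hqw, ← hce2]
                exact hjun.1
              · rw [List.head?_append, hh]; rfl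
              · rw [List.getLast?_append]
                rw [List.getLast?_cons_cons] at hlastb
                rw [hlastb]; rfl
              · rw [List.nodup_append]
                refine ⟨hnd, (List.nodup_cons.1 hndb).2, ?_⟩
                intro v hv v' hv' hvv
                subst hvv
                obtain ⟨h1, h2⟩ := hcross v hv (List.mem_cons_of_mem c hv')
                refine (List.nodup_cons.1 hndb).1 ?_
                rw [← h2]
                exact hv'
              · intro v hv
                rcases List.mem_append.1 hv with h | h
                · exact Or.inl h
                · exact Or.inr (List.mem_cons_of_mem c h)
        choose gg hgg using hexG
        refine ⟨PA.attach.map (fun z => gg z.1 z.2), ?_, ?_, ?_⟩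
        · rw [List.length_map, List.length_attach, hPAlen]
        · intro l hl
          obtain ⟨⟨la, hla⟩, -, rfl⟩ := List.mem_map.1 hl
          exact ⟨(hgg la hla).1, (hgg la hla).2.1⟩
        · refine pairwise_of_attach_map hPApair _ ?_
          intro la hla la' hla' hd
          obtain ⟨hconn, hndg, e, lb, hlaste, hlbPB, hlbh, hmemg⟩ := hgg la hla
          obtain ⟨hconn', hndg', e', lb', hlaste', hlbPB', hlbh', hmemg'⟩ := hgg la' hla'
          obtain ⟨a1, e1, hch1, hnd1, hh1, haA1, hle1, heSx1, huniqa1⟩ := hPAmem la hla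
          obtain ⟨a2, e2, hch2, hnd2, hh2, haA2, hle2, heSx2, huniqa2⟩ := hPAmem la' hla'
          have he1 : e1 = e := by rw [hle1] at hlaste; exact Option.some.inj hlaste
          have he2 : e2 = e' := by rw [hle2] at hlaste'; exact Option.some.inj hlaste'
          rw [he1] at hle1 heSx1 huniqa1
          rw [he2] at hle2 heSx2 huniqa2
          have hee : e ≠ e' := by
            intro h
            refine hd (List.mem_of_mem_getLast? (by rw [hle1]; rfl)) ?_
            rw [h]
            exact List.mem_of_mem_getLast? (by rw [hle2]; rfl)
          obtain ⟨c1, b1, hchb1, hndb1, hhb1, hcSy1, hlb1, hbB1, huniqb1⟩ := hPBmem lb hlbPB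
          obtain ⟨c2, b2, hchb2, hndb2, hhb2, hcSy2, hlb2, hbB2, huniqb2⟩ := hPBmem lb' hlbPB'
          intro v hv hv'
          rcases hmemg v hv with h1 | h1 <;> rcases hmemg' v hv' with h2 | h2
          · exact hd h1 h2
          · -- v ∈ la and v ∈ lb'
            obtain ⟨hve, hvc⟩ := cross_lemma hSsep hSsubx hSsuby hch1 hnd1 hh1 haA1 hle1
              heSx1 huniqa1 hchb2 hndb2 hhb2 hcSy2 hlb2 hbB2 huniqb2 h1 h2
            have hc2 : c2 = ψ e' := by rw [hhb2] at hlbh'; exact Option.some.inj hlbh'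
            exact hψne e heSx1 e' heSx2 hee (by rw [← hc2, ← hvc, hve])
          · -- v ∈ lb and v ∈ la'
            obtain ⟨hve, hvc⟩ := cross_lemma hSsep hSsubx hSsuby hch2 hnd2 hh2 haA2 hle2
              heSx2 huniqa2 hchb1 hndb1 hhb1 hcSy1 hlb1 hbB1 huniqb1 h2 h1
            have hc1 : c1 = ψ e := by rw [hhb1] at hlbh; exact Option.some.inj hlbh
            exact hψne e' heSx2 e heSx1 (fun h => hee h.symm) (by rw [← hc1, ← hvc, hve])
          · -- v ∈ lb and v ∈ lb'
            have hlbne : lb ≠ lb' := by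
              intro h
              rw [h, hlbh'] at hlbh
              exact hee (hψinj e heSx1 e' heSx2 (Option.some.inj hlbh).symm)
            letI : Std.Symm (α := List V) List.Disjoint := ⟨fun _ _ h => h.symm⟩
            exact (hPBpair.forall hlbPB hlbPB' hlbne) h1 h2
    · exact menger_base hE hsep
end Chunk6

section Chunk7
lemma walk_of_chain {V : Type*} {G : SimpleGraph V} :
    ∀ (l : List V) (a b : V), l.Chain' G.Adj → l.head? = some a → l.getLast? = some b →
    ∃ w : G.Walk a b, w.support = l := by
  intro l
  induction l with
  | nil => intro a b _ h _; simp at h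
  | cons c r ih =>
    intro a b hch hh hl
    have hca : c = a := by simpa using hh
    subst hca
    rcases r with _ | ⟨d, r'⟩
    · have hcb : c = b := by simpa using hl
      subst hcb
      exact ⟨SimpleGraph.Walk.nil, rfl⟩
    · have hadj : G.Adj c d := (List.isChain_cons_cons.1 hch).1
      obtain ⟨w, hw⟩ := ih d b hch.tail rfl (by rw [← List.getLast?_cons_cons (a := c)]; exact hl)
      exact ⟨SimpleGraph.Walk.cons hadj w, by rw [SimpleGraph.Walk.support_cons, hw]⟩

lemma sep_card_bound {V : Type*} [Fintype V] [DecidableEq V]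
    (G : SimpleGraph V) [DecidableRel G.Adj] (α : ℝ) (hα : 0 < α)
    (hG : G.IsExpander α) (A B : Finset V) (t : ℝ) (ht : 0 < t)
    (hA : t ≤ A.card) (hB : t ≤ B.card) (S : Finset V) (hS : SepR G.Adj A B S) :
    t * α / (1 + α) ≤ S.card := by
  classical
  set Reach : Finset V → Finset V := fun C =>
    Finset.univ.filter (fun u => ∃ l : List V, l.Chain' G.Adj ∧ (∃ c ∈ C \ S, l.head? = some c) ∧
      l.getLast? = some u ∧ ∀ v ∈ l, v ∉ S) with hReachdef
  have hreach_sub : ∀ C : Finset V, C \ S ⊆ Reach C := by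
    intro C c hc
    rw [hReachdef, Finset.mem_filter]
    exact ⟨Finset.mem_univ c, [c], List.isChain_singleton c, ⟨c, hc, rfl⟩, rfl,
      fun v hv => by rw [List.mem_singleton.1 hv]; exact (Finset.mem_sdiff.1 hc).2⟩
  have hreach_S : ∀ C : Finset V, ∀ u ∈ Reach C, u ∉ S := by
    intro C u hu
    rw [hReachdef, Finset.mem_filter] at hu
    obtain ⟨-, l, -, -, hlast, hSl⟩ := hu
    exact hSl u (List.mem_of_mem_getLast? (by rw [hlast]; rfl))
  have hreach_bd : ∀ C : Finset V, (Reach C).biUnion (fun v => G.neighborFinset v) \ Reach C ⊆ S := by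
    intro C v hv
    rw [Finset.mem_sdiff, Finset.mem_biUnion] at hv
    obtain ⟨⟨u, hu, hadj⟩, hvR⟩ := hv
    rw [SimpleGraph.mem_neighborFinset] at hadj
    by_contra hvS
    apply hvR
    rw [hReachdef, Finset.mem_filter] at hu ⊢
    obtain ⟨-, l, hch, ⟨c, hcC, hh⟩, hlast, hSl⟩ := hu
    refine ⟨Finset.mem_univ v, l ++ [v], ?_, ⟨c, hcC, by rw [List.head?_append, hh]; rfl⟩,
      by rw [List.getLast?_append]; rfl, ?_⟩
    · simp only [List.Chain', List.isChain_append]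
      refine ⟨hch, List.isChain_singleton v, ?_⟩
      intro p hp q hq
      rw [hlast] at hp
      have hpu : p = u := by symm; simpa using hp
      have hqv : q = v := by symm; simpa using hq
      rw [hpu, hqv]
      exact hadj
    · intro z hz
      rcases List.mem_append.1 hz with h | h
      · exact hSl z h
      · rw [List.mem_singleton.1 h]; exact hvS
  have hUW : ∀ u, u ∈ Reach A → u ∈ Reach B → False := by
    intro u hu hw
    rw [hReachdef, Finset.mem_filter] at hu hw
    obtain ⟨-, lA, hchA, ⟨a0, ha0, hhA⟩, hlastA, hSA⟩ := hu
    obtain ⟨-, lB, hchB, ⟨b0, hb0, hhB⟩, hlastB, hSB⟩ := hw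
    refine seg_contra (R' := G.Adj) hS (qa := lA) (qb := lB.reverse) hchA ?_
      ⟨a0, (Finset.mem_sdiff.1 ha0).1, hhA⟩ hlastA ?_ ⟨b0, (Finset.mem_sdiff.1 hb0).1, ?_⟩
      (fun s hs hsl => hSA s hsl hs) (fun s hs hsl => hSB s (by simpa using hsl) hs)
    · simp only [List.Chain', List.isChain_reverse]
      exact hchB.imp (fun _ _ h => h.symm)
    · rw [List.head?_reverse]
      exact hlastB
    · rw [List.getLast?_reverse]
      exact hhB
  have hdisj : Disjoint (Reach A) (Reach B) := by
    rw [Finset.disjoint_left]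
    intro u hu hw
    exact hUW u hu hw
  have hsum : (Reach A).card + (Reach B).card ≤ Fintype.card V := by
    rw [← Finset.card_union_of_disjoint hdisj]
    exact Finset.card_le_univ _
  have main : ∀ (X C : Finset V), t ≤ C.card → C \ S ⊆ X → (∀ u ∈ X, u ∉ S) →
      (X.biUnion (fun v => G.neighborFinset v) \ X ⊆ S) → 2 * X.card ≤ Fintype.card V →
      t * α / (1 + α) ≤ S.card := by
    intro X C htC hCX hXS hbd hhalf
    have hexp : α * X.card ≤ ((X.biUnion (fun v => G.neighborFinset v)) \ X).card := hG X hhalf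
    have h2 : (((X.biUnion (fun v => G.neighborFinset v)) \ X).card : ℝ) ≤ S.card :=
      Nat.cast_le.2 (Finset.card_le_card hbd)
    have h3 : (C.card : ℝ) ≤ X.card + S.card := by
      have : C ⊆ X ∪ S := by
        intro c hc
        by_cases hcS : c ∈ S
        · exact Finset.mem_union_right _ hcS
        · exact Finset.mem_union_left _ (hCX (Finset.mem_sdiff.2 ⟨hc, hcS⟩))
      have := (Finset.card_le_card this).trans (Finset.card_union_le X S)
      exact_mod_cast this
    have h1α : (0 : ℝ) < 1 + α := by linarith
    rw [div_le_iff₀ h1α]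
    nlinarith [htC.trans h3]
  by_cases hhalf : 2 * (Reach A).card ≤ Fintype.card V
  · exact main (Reach A) A hA (hreach_sub A) (hreach_S A) (hreach_bd A) hhalf
  · have hhalf2 : 2 * (Reach B).card ≤ Fintype.card V := by omega
    exact main (Reach B) B hB (hreach_sub B) (hreach_S B) (hreach_bd B) hhalf2
end Chunk7

/-- Let `G` be an `α`-expander and `A, B` vertex sets of size at least `t`.
Then `G` contains at least `tα/(1+α)` pairwise vertex-disjoint paths,
each with one endpoint in `A` and the other in `B`. -/
theorem expander_disjoint_paths {V : Type*} [Fintype V] [DecidableEq V]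
    (G : SimpleGraph V) [DecidableRel G.Adj] (α : ℝ) (hα : 0 < α)
    (hG : G.IsExpander α) (A B : Finset V) (t : ℝ) (ht : 0 < t)
    (hA : t ≤ A.card) (hB : t ≤ B.card) :
    ∃ (k : ℕ) (a b : Fin k → V) (p : ∀ i, G.Walk (a i) (b i)),
      t * α / (1 + α) ≤ k ∧
      (∀ i, (p i).IsPath) ∧
      (∀ i, a i ∈ A ∧ b i ∈ B) ∧
      (∀ i j, i ≠ j → ∀ x ∈ (p i).support, x ∉ (p j).support) := by
  classical
  set k := ⌈t * α / (1 + α)⌉₊ with hkdef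
  have hsepbound : ∀ S : Finset V, SepR G.Adj A B S → k ≤ S.card := fun S hS =>
    Nat.ceil_le.2 (sep_card_bound G α hα hG A B t ht hA hB S hS)
  obtain ⟨P, hPlen, hPmem, hPpair⟩ := mengerR (esize G.Adj) G.Adj A B k le_rfl hsepbound
  have hwalks : ∀ i : Fin k, ∃ (a b : V) (w : G.Walk a b), w.IsPath ∧ a ∈ A ∧ b ∈ B ∧
      w.support = P.get (i.cast hPlen.symm) := by
    intro i
    obtain ⟨⟨a, b, hch, hh, hl, ha, hb⟩, hnd⟩ :=
      hPmem (P.get (i.cast hPlen.symm)) (P.get_mem _)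
    obtain ⟨w, hw⟩ := walk_of_chain _ a b hch hh hl
    exact ⟨a, b, w, (SimpleGraph.Walk.isPath_def w).2 (by rw [hw]; exact hnd), ha, hb, hw⟩
  choose av bv wv hp ha hb hsup using hwalks
  refine ⟨k, av, bv, wv, Nat.le_ceil _, hp, fun i => ⟨ha i, hb i⟩, ?_⟩
  intro i j hij xx hxi hxj
  rw [hsup i] at hxi
  rw [hsup j] at hxj
  have hpg := List.pairwise_iff_get.1 hPpair
  have hne : (i.cast hPlen.symm) ≠ (j.cast hPlen.symm) := by
    intro h
    exact hij (Fin.ext (by simpa using congrArg Fin.val h))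
  rcases lt_or_gt_of_ne hne with h | h
  · exact hpg _ _ h hxi hxj
  · exact absurd hxi (hpg _ _ h hxj)
end

section
/- Let G be a graph with an odd cycle C of odd length ℓ, and let u, v be two vertices each connected to C by vertex-disjoint paths p_u and p_v (disjoint from each other and meeting C only in their endpoints). Then there exist both an odd-length and an even-length path in G between u and v, each of length at most |p_u| + |p_v| + ℓ. -/
open SimpleGraph Walk

private lemma end_mem_tail_support_of_closed {V : Type*} {G : SimpleGraph V} {x : V}
    (c : G.Walk x x) (h : c ≠ SimpleGraph.Walk.nil) : x ∈ c.support.tail := by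
  cases c with
  | nil => exact absurd rfl h
  | cons h p => simp [p.end_mem_support]

private lemma mem_support_rotate_iff {V : Type*} {G : SimpleGraph V} {x u : V} [DecidableEq V]
    (c : G.Walk x x) (hne : c ≠ SimpleGraph.Walk.nil) (hu : u ∈ c.support) (y : V) :
    y ∈ (c.rotate u hu).support ↔ y ∈ c.support := by
  have hrot := SimpleGraph.Walk.support_rotate c u hu
  have hmemtail : ∀ z, z ∈ (c.rotate u hu).support.tail ↔ z ∈ c.support.tail :=
    fun z => hrot.mem_iff
  rw [(c.rotate u hu).support_eq_cons, c.support_eq_cons]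
  simp only [List.mem_cons, hmemtail]
  constructor
  · rintro (rfl | h)
    · rcases List.mem_cons.mp (c.support_eq_cons ▸ hu) with rfl | h
      · left; rfl
      · right; exact h
    · right; exact h
  · rintro (rfl | h)
    · right
      have : y ∈ c.support.tail := end_mem_tail_support_of_closed c hne
      exact this
    · right; exact h

private lemma isPath_append_of_meet {V : Type*} {G : SimpleGraph V} {a b d : V}
    {p : G.Walk a b} {q : G.Walk b d} (hp : p.IsPath) (hq : q.IsPath)
    (h : ∀ y, y ∈ p.support → y ∈ q.support → y = b) : (p.append q).IsPath := by
  rw [SimpleGraph.Walk.isPath_def, SimpleGraph.Walk.support_append, List.nodup_append]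
  refine ⟨hp.support_nodup, hq.support_nodup.tail, ?_⟩
  intro y hy z hy' rfl
  have hyq : y ∈ q.support := by
    rw [q.support_eq_cons]; exact List.mem_cons_of_mem _ hy'
  have : y = b := h y hy hyq
  subst this
  have : q.support.Nodup := hq.support_nodup
  rw [q.support_eq_cons, List.nodup_cons] at this
  exact this.1 hy'

/-- Let `G` contain an odd cycle `c` (of odd length) and let `u, v` be vertices
joined to the cycle by paths `pu` (from `u` to `wu ∈ c`) and `pv` (from `v` to
`wv ∈ c`) which are disjoint from each other and meet the cycle only in their
endpoints.  Then there are both an odd-length and an even-length path from `u`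
to `v` in `G`, each of length at most `|pu| + |pv| + |c|`. -/
theorem odd_and_even_path_via_odd_cycle {V : Type*}
    (G : SimpleGraph V) {x u v wu wv : V} (c : G.Walk x x)
    (hc : c.IsCycle) (hodd : Odd c.length)
    (pu : G.Walk u wu) (pv : G.Walk v wv)
    (hpu : pu.IsPath) (hpv : pv.IsPath)
    (hwu : wu ∈ c.support) (hwv : wv ∈ c.support)
    (hmeetu : ∀ y ∈ pu.support, y ∈ c.support → y = wu)
    (hmeetv : ∀ y ∈ pv.support, y ∈ c.support → y = wv)
    (hdisj : ∀ y ∈ pu.support, y ∉ pv.support) :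
    ∃ (q₁ q₂ : G.Walk u v),
      q₁.IsPath ∧ q₂.IsPath ∧
      Odd q₁.length ∧ Even q₂.length ∧
      q₁.length ≤ pu.length + pv.length + c.length ∧
      q₂.length ≤ pu.length + pv.length + c.length := by
  classical
  -- wu ≠ wv
  have hne : wv ≠ wu := by
    intro h
    exact hdisj wu pu.end_mem_support (h ▸ pv.end_mem_support)
  have hcne : c ≠ SimpleGraph.Walk.nil := hc.ne_nil
  -- rotate the cycle to start at wu
  set c' := c.rotate wu hwu with hc'def
  have hc' : c'.IsCycle := hc.rotate hwu
  have hmemc' : ∀ y, y ∈ c'.support ↔ y ∈ c.support :=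
    mem_support_rotate_iff c hcne hwu
  have hwv' : wv ∈ c'.support := (hmemc' wv).2 hwv
  set d₁ := c'.takeUntil wv hwv' with hd₁
  set d₂ := c'.dropUntil wv hwv' with hd₂
  have hspec : d₁.append d₂ = c' := c'.take_spec hwv'
  -- length of c'
  have hlenc' : c'.length = c.length := by
    rw [hc'def, SimpleGraph.Walk.rotate, SimpleGraph.Walk.length_append, Nat.add_comm,
      ← SimpleGraph.Walk.length_append, c.take_spec hwu]
  have hlensum : d₁.length + d₂.length = c.length := by
    have := congrArg SimpleGraph.Walk.length hspec
    rwa [SimpleGraph.Walk.length_append, hlenc'] at this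
  -- tail support decomposition
  have htail : c'.support.tail = d₁.support.tail ++ d₂.support.tail := by
    conv_lhs => rw [← hspec]
    rw [SimpleGraph.Walk.tail_support_append]
  have hnd := hc'.support_nodup
  rw [htail, List.nodup_append] at hnd
  obtain ⟨n₁, n₂, hdisjt⟩ := hnd
  have hwu_d₂ : wu ∈ d₂.support.tail := by
    have := d₂.end_mem_support
    rw [d₂.support_eq_cons, List.mem_cons] at this
    rcases this with h | h
    · exact absurd h.symm hne
    · exact h
  have hwv_d₁ : wv ∈ d₁.support.tail := by
    have := d₁.end_mem_support
    rw [d₁.support_eq_cons, List.mem_cons] at this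
    rcases this with h | h
    · exact absurd h hne
    · exact h
  have hpath₁ : d₁.IsPath := by
    rw [SimpleGraph.Walk.isPath_def, d₁.support_eq_cons, List.nodup_cons]
    exact ⟨fun h => hdisjt _ h _ hwu_d₂ rfl, n₁⟩
  have hpath₂ : d₂.IsPath := by
    rw [SimpleGraph.Walk.isPath_def, d₂.support_eq_cons, List.nodup_cons]
    exact ⟨fun h => hdisjt _ hwv_d₁ _ h rfl, n₂⟩
  have hsub₁ : ∀ y ∈ d₁.support, y ∈ c.support := fun y hy =>
    (hmemc' y).1 (c'.support_takeUntil_subset hwv' hy)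
  have hsub₂ : ∀ y ∈ d₂.support, y ∈ c.support := fun y hy =>
    (hmemc' y).1 (c'.support_dropUntil_subset hwv' hy)
  -- generic assembly
  have key : ∀ (a : G.Walk wu wv), a.IsPath → (∀ y ∈ a.support, y ∈ c.support) →
      ∃ q : G.Walk u v, q.IsPath ∧ q.length = pu.length + pv.length + a.length := by
    intro a ha hsub
    refine ⟨pu.append (a.append pv.reverse), ?_, ?_⟩
    · have hinner : (a.append pv.reverse).IsPath := by
        refine isPath_append_of_meet ha hpv.reverse ?_
        intro y hy hy'
        rw [SimpleGraph.Walk.support_reverse, List.mem_reverse] at hy'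
        exact hmeetv y hy' (hsub y hy)
      refine isPath_append_of_meet hpu hinner ?_
      intro y hy hy'
      rw [SimpleGraph.Walk.mem_support_append_iff] at hy'
      rcases hy' with h | h
      · exact hmeetu y hy (hsub y h)
      · rw [SimpleGraph.Walk.support_reverse, List.mem_reverse] at h
        exact absurd h (hdisj y hy)
    · rw [SimpleGraph.Walk.length_append, SimpleGraph.Walk.length_append,
        SimpleGraph.Walk.length_reverse]
      omega
  obtain ⟨q, hq, hqlen⟩ := key d₁ hpath₁ hsub₁
  obtain ⟨q', hq', hq'len⟩ := key d₂.reverse hpath₂.reverse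
    (fun y hy => hsub₂ y (by rwa [SimpleGraph.Walk.support_reverse, List.mem_reverse] at hy))
  rw [SimpleGraph.Walk.length_reverse] at hq'len
  have hb : q.length ≤ pu.length + pv.length + c.length := by omega
  have hb' : q'.length ≤ pu.length + pv.length + c.length := by omega
  have hpar : Odd (q.length + q'.length) := by
    obtain ⟨k, hk⟩ := hodd
    rw [Nat.odd_iff]
    omega
  rcases Nat.even_or_odd q.length with he | ho
  · have : Odd q'.length := by
      rcases Nat.even_or_odd q'.length with h | h
      · exact absurd (he.add h) (Nat.not_even_iff_odd.mpr hpar)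
      · exact h
    exact ⟨q', q, hq', hq, this, he, hb', hb⟩
  · have : Even q'.length := by
      rcases Nat.even_or_odd q'.length with h | h
      · exact h
      · exact absurd (ho.add_odd h) (Nat.not_even_iff_odd.mpr hpar)
    exact ⟨q, q', hq, hq', ho, this, hb, hb'⟩
end
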